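/- Contracting each micro tree of the Farzan–Munro decomposition of a binary tree into one matching pair of parentheses (replacing its left chunk by '(' and its right chunk by ')') yields the BP encoding of the top-tier tree, the binary tree obtained by contracting each micro tree into a single node. -/

import Mathlib

/-- A binary tree: `leaf` is the empty tree; each internal node has an
optional left and an optional right subtree (possibly `leaf`). -/
inductive BinTree : Type where
  | leaf : BinTree
  | node : BinTree → BinTree → BinTree
deriving DecidableEq

namespace BinTree

/-- Number of nodes of a binary tree. -/
def size : BinTree → ℕ
  | leaf => 0
  | node l r => l.size + r.size + 1

/-- BalancedBP-parenthesis encoding of binary trees: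
`BP(empty) = ε`, `BP(t) = '(' ++ BP(t_l) ++ ')' ++ BP(t_r)`.
`true` is an opening parenthesis, `false` a closing one. -/
def bp : BinTree → List Bool
  | leaf => []
  | node l r => true :: (l.bp ++ false :: r.bp)

/-- The subtree reached by following a path (`false` = left, `true` = right). -/
def subtreeAt : BinTree → List Bool → Option BinTree
  | t, [] => some t
  | leaf, _ :: _ => none
  | node l _, false :: p => subtreeAt l p
  | node _ r, true :: p => subtreeAt r p

/-- A path identifies an actual node of the tree (not an empty slot). -/
def ValidPath (t : BinTree) (p : List Bool) : Prop :=
  ∃ l r, subtreeAt t p = some (node l r)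

/-- Index (0-based) of the opening parenthesis of the node at a path. -/
def openIdx : BinTree → List Bool → Option ℕ
  | leaf, _ => none
  | node _ _, [] => some 0
  | node l _, false :: p => (openIdx l p).map (· + 1)
  | node l r, true :: p => (openIdx r p).map (· + (l.bp.length + 2))

/-- Index (0-based) of the closing parenthesis of the node at a path. -/
def closeIdx : BinTree → List Bool → Option ℕ
  | leaf, _ => none
  | node l _, [] => some (l.bp.length + 1)
  | node l _, false :: p => (closeIdx l p).map (· + 1)
  | node l r, true :: p => (closeIdx r p).map (· + (l.bp.length + 2))

/-- Inorder rank (0-based) of the node at a path. -/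
def inorderIdx : BinTree → List Bool → Option ℕ
  | leaf, _ => none
  | node l _, [] => some l.size
  | node l _, false :: p => inorderIdx l p
  | node l r, true :: p => (inorderIdx r p).map (· + (l.size + 1))

end BinTree

/-- A sequence of parentheses (`true` = '(') is balanced: equally many opening
and closing parentheses, and every prefix has at least as many opening ones. -/
def BalancedBP (s : List Bool) : Prop :=
  s.count true = s.count false ∧
  ∀ k, (s.take k).count false ≤ (s.take k).count true

/-- `excess s k`: number of opening minus closing parentheses among the first `k` symbols. -/
def excess (s : List Bool) (k : ℕ) : ℤ :=
  ((s.take k).count true : ℤ) - ((s.take k).count false : ℤ)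

/-- `IsMatch s i j`: positions `i < j` form a matching pair of parentheses
(the standard stack-based matching). -/
def IsMatch (s : List Bool) (i j : ℕ) : Prop :=
  i < j ∧ j < s.length ∧ s[i]? = some true ∧ s[j]? = some false ∧
  excess s (j + 1) = excess s i ∧
  ∀ k, i < k → k ≤ j → excess s i < excess s k

/-- `EnclosePair s i v j`: `j` is the closing parenthesis whose matching pair
tightly encloses the matching pair `(i, v)`. -/
def EnclosePair (s : List Bool) (i v j : ℕ) : Prop :=
  (∃ i', IsMatch s i' j ∧ i' < i ∧ v < j) ∧
  ∀ i'' j'', IsMatch s i'' j'' → i'' < i → v < j'' → j ≤ j''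

/-- Longest common prefix of two paths. -/
def lcp : List Bool → List Bool → List Bool
  | a :: as, b :: bs => if a = b then a :: lcp as bs else []
  | _, _ => []

/-- `M` is a micro tree of `t`: a nonempty, connected set of nodes of `t`
closed between its root and each of its members. -/
def IsMicroTree (t : BinTree) (M : Set (List Bool)) : Prop :=
  M.Nonempty ∧ (∀ p ∈ M, BinTree.ValidPath t p) ∧
  ∃ r ∈ M, ∀ p ∈ M, r <+: p ∧ ∀ q, r <+: q → q <+: p → BinTree.ValidPath t q → q ∈ M

/-- Outgoing edges of `M` towards children: nodes of `t` outside `M` whose parent is in `M`. -/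
def childEdges (t : BinTree) (M : Set (List Bool)) : Set (List Bool) :=
  {q | q ∉ M ∧ BinTree.ValidPath t q ∧ ∃ p ∈ M, ∃ b, q = p ++ [b]}

/-- The set of BP positions (opening and closing parentheses) of the nodes of `M`. -/
def bpPositions (t : BinTree) (M : Set (List Bool)) : Set ℕ :=
  {k | ∃ p ∈ M, BinTree.openIdx t p = some k ∨ BinTree.closeIdx t p = some k}

namespace BinTree

lemma subtreeAt_append (t : BinTree) (p q : List Bool) :
    subtreeAt t (p ++ q) = (subtreeAt t p).bind (fun u => subtreeAt u q) := by
  induction p generalizing t with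
  | nil => simp [subtreeAt]
  | cons bb p ih =>
    cases t with
    | leaf => simp [subtreeAt]
    | node l r => cases bb <;> simp [subtreeAt, ih]

lemma valid_parent {t : BinTree} {p : List Bool} {bb : Bool}
    (h : ValidPath t (p ++ [bb])) : ValidPath t p := by
  obtain ⟨l, r, h⟩ := h
  rw [subtreeAt_append] at h
  cases hs : subtreeAt t p with
  | none => rw [hs] at h; simp at h
  | some u =>
    rw [hs] at h
    cases u with
    | leaf => cases bb <;> simp_all [subtreeAt]
    | node l' r' => exact ⟨l', r', hs⟩

lemma openIdx_valid {t : BinTree} {p : List Bool} {k : ℕ}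
    (h : openIdx t p = some k) : ValidPath t p := by
  induction t generalizing p k with
  | leaf => simp [openIdx] at h
  | node l r ihl ihr =>
    cases p with
    | nil => exact ⟨l, r, rfl⟩
    | cons bb p =>
      cases bb
      · simp only [openIdx, Option.map_eq_some_iff] at h
        obtain ⟨k', hk', -⟩ := h
        obtain ⟨l', r', h⟩ := ihl hk'
        exact ⟨l', r', h⟩
      · simp only [openIdx, Option.map_eq_some_iff] at h
        obtain ⟨k', hk', -⟩ := h
        obtain ⟨l', r', h⟩ := ihr hk'
        exact ⟨l', r', h⟩

lemma valid_openIdx {t : BinTree} {p : List Bool}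
    (h : ValidPath t p) : ∃ k, openIdx t p = some k := by
  induction t generalizing p with
  | leaf => obtain ⟨l, r, h⟩ := h; cases p <;> simp_all [subtreeAt]
  | node l r ihl ihr =>
    cases p with
    | nil => exact ⟨0, rfl⟩
    | cons bb p =>
      obtain ⟨l', r', h⟩ := h
      cases bb
      · obtain ⟨k, hk⟩ := ihl ⟨l', r', h⟩
        exact ⟨k + 1, by simp [openIdx, hk]⟩
      · obtain ⟨k, hk⟩ := ihr ⟨l', r', h⟩
        exact ⟨k + (l.bp.length + 2), by simp [openIdx, hk]⟩

lemma valid_closeIdx {t : BinTree} {p : List Bool}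
    (h : ValidPath t p) : ∃ k, closeIdx t p = some k := by
  induction t generalizing p with
  | leaf => obtain ⟨l, r, h⟩ := h; cases p <;> simp_all [subtreeAt]
  | node l r ihl ihr =>
    cases p with
    | nil => exact ⟨l.bp.length + 1, rfl⟩
    | cons bb p =>
      obtain ⟨l', r', h⟩ := h
      cases bb
      · obtain ⟨k, hk⟩ := ihl ⟨l', r', h⟩
        exact ⟨k + 1, by simp [closeIdx, hk]⟩
      · obtain ⟨k, hk⟩ := ihr ⟨l', r', h⟩
        exact ⟨k + (l.bp.length + 2), by simp [closeIdx, hk]⟩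

lemma openIdx_get {t : BinTree} {p : List Bool} {k : ℕ}
    (h : openIdx t p = some k) : (bp t)[k]? = some true := by
  induction t generalizing p k with
  | leaf => simp [openIdx] at h
  | node l r ihl ihr =>
    cases p with
    | nil =>
      simp only [openIdx, Option.some_inj] at h
      subst h; simp [bp]
    | cons bb p =>
      cases bb
      · simp only [openIdx, Option.map_eq_some_iff] at h
        obtain ⟨k', hk', rfl⟩ := h
        have := ihl hk'
        have hlt : k' < (bp l).length := (List.getElem?_eq_some_iff.mp this).1
        rw [bp]
        rw [List.getElem?_cons_succ, List.getElem?_append_left hlt]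
        exact this
      · simp only [openIdx, Option.map_eq_some_iff] at h
        obtain ⟨k', hk', rfl⟩ := h
        have := ihr hk'
        rw [bp]
        have : (l.bp ++ false :: r.bp)[k' + (l.bp.length + 1)]? = some true := by
          rw [List.getElem?_append_right (by omega)]
          have he : k' + (l.bp.length + 1) - l.bp.length = k' + 1 := by omega
          rw [he, List.getElem?_cons_succ]
          exact this
        show (true :: (l.bp ++ false :: r.bp))[k' + (l.bp.length + 2)]? = some true
        have he : k' + (l.bp.length + 2) = (k' + (l.bp.length + 1)) + 1 := by omega
        rw [he, List.getElem?_cons_succ]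
        exact this

lemma closeIdx_get {t : BinTree} {p : List Bool} {k : ℕ}
    (h : closeIdx t p = some k) : (bp t)[k]? = some false := by
  induction t generalizing p k with
  | leaf => simp [closeIdx] at h
  | node l r ihl ihr =>
    cases p with
    | nil =>
      simp only [closeIdx, Option.some_inj] at h
      subst h
      show (true :: (l.bp ++ false :: r.bp))[l.bp.length + 1]? = some false
      rw [List.getElem?_cons_succ, List.getElem?_append_right (le_refl _)]
      simp
    | cons bb p =>
      cases bb
      · simp only [closeIdx, Option.map_eq_some_iff] at h
        obtain ⟨k', hk', rfl⟩ := h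
        have := ihl hk'
        have hlt : k' < (bp l).length := (List.getElem?_eq_some_iff.mp this).1
        show (true :: (l.bp ++ false :: r.bp))[k' + 1]? = some false
        rw [List.getElem?_cons_succ, List.getElem?_append_left hlt]
        exact this
      · simp only [closeIdx, Option.map_eq_some_iff] at h
        obtain ⟨k', hk', rfl⟩ := h
        have := ihr hk'
        show (true :: (l.bp ++ false :: r.bp))[k' + (l.bp.length + 2)]? = some false
        have he : k' + (l.bp.length + 2) = (k' + (l.bp.length + 1)) + 1 := by omega
        rw [he, List.getElem?_cons_succ, List.getElem?_append_right (by omega)]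
        have he2 : k' + (l.bp.length + 1) - l.bp.length = k' + 1 := by omega
        rw [he2, List.getElem?_cons_succ]
        exact this

lemma openIdx_lt_length {t : BinTree} {p : List Bool} {k : ℕ}
    (h : openIdx t p = some k) : k < (bp t).length :=
  (List.getElem?_eq_some_iff.mp (openIdx_get h)).1

lemma closeIdx_lt_length {t : BinTree} {p : List Bool} {k : ℕ}
    (h : closeIdx t p = some k) : k < (bp t).length :=
  (List.getElem?_eq_some_iff.mp (closeIdx_get h)).1

lemma closeIdx_valid {t : BinTree} {p : List Bool} {k : ℕ}
    (h : closeIdx t p = some k) : ValidPath t p := by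
  induction t generalizing p k with
  | leaf => simp [closeIdx] at h
  | node l r ihl ihr =>
    cases p with
    | nil => exact ⟨l, r, rfl⟩
    | cons bb p =>
      cases bb
      · simp only [closeIdx, Option.map_eq_some_iff] at h
        obtain ⟨k', hk', -⟩ := h
        obtain ⟨l', r', h⟩ := ihl hk'
        exact ⟨l', r', h⟩
      · simp only [closeIdx, Option.map_eq_some_iff] at h
        obtain ⟨k', hk', -⟩ := h
        obtain ⟨l', r', h⟩ := ihr hk'
        exact ⟨l', r', h⟩

end BinTree
namespace BinTree

lemma open_close_subtree {t : BinTree} {p : List Bool} {u : BinTree} {k : ℕ}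
    (hs : subtreeAt t p = some u) (ho : openIdx t p = some k) :
    ∃ ul ur, u = node ul ur ∧ closeIdx t p = some (k + (bp ul).length + 1) := by
  induction t generalizing p k with
  | leaf => simp [openIdx] at ho
  | node l r ihl ihr =>
    cases p with
    | nil =>
      simp only [subtreeAt, Option.some_inj] at hs
      simp only [openIdx, Option.some_inj] at ho
      exact ⟨l, r, hs.symm, by simp [closeIdx, ← ho]⟩
    | cons bb p =>
      cases bb
      · simp only [openIdx, Option.map_eq_some_iff] at ho
        obtain ⟨k', hk', rfl⟩ := ho
        obtain ⟨ul, ur, hu, hc⟩ := ihl hs hk'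
        exact ⟨ul, ur, hu, by simp [closeIdx, hc]; omega⟩
      · simp only [openIdx, Option.map_eq_some_iff] at ho
        obtain ⟨k', hk', rfl⟩ := ho
        obtain ⟨ul, ur, hu, hc⟩ := ihr hs hk'
        exact ⟨ul, ur, hu, by simp [closeIdx, hc]; omega⟩

lemma open_lt_close {t : BinTree} {p : List Bool} {k c : ℕ}
    (ho : openIdx t p = some k) (hc : closeIdx t p = some c) : k < c := by
  obtain ⟨l', r', hs⟩ := openIdx_valid ho
  obtain ⟨ul, ur, -, hc'⟩ := open_close_subtree hs ho
  rw [hc'] at hc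
  simp only [Option.some_inj] at hc
  omega

lemma openIdx_inj {t : BinTree} {p q : List Bool} {k : ℕ}
    (hp : openIdx t p = some k) (hq : openIdx t q = some k) : p = q := by
  induction t generalizing p q k with
  | leaf => simp [openIdx] at hp
  | node l r ihl ihr =>
    cases p with
    | nil =>
      simp only [openIdx, Option.some_inj] at hp
      cases q with
      | nil => rfl
      | cons bb q =>
        cases bb <;> simp only [openIdx, Option.map_eq_some_iff] at hq <;>
          (obtain ⟨k', -, h⟩ := hq; omega)
    | cons bb p =>
      cases q with
      | nil =>
        simp only [openIdx, Option.some_inj] at hq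
        cases bb <;> simp only [openIdx, Option.map_eq_some_iff] at hp <;>
          (obtain ⟨k', -, h⟩ := hp; omega)
      | cons bb' q =>
        cases bb <;> cases bb' <;>
          simp only [openIdx, Option.map_eq_some_iff] at hp hq
        · obtain ⟨k1, h1, e1⟩ := hp; obtain ⟨k2, h2, e2⟩ := hq
          have : k1 = k2 := by omega
          subst this
          rw [ihl h1 h2]
        · obtain ⟨k1, h1, e1⟩ := hp; obtain ⟨k2, h2, e2⟩ := hq
          have := openIdx_lt_length h1
          omega
        · obtain ⟨k1, h1, e1⟩ := hp; obtain ⟨k2, h2, e2⟩ := hq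
          have := openIdx_lt_length h2
          omega
        · obtain ⟨k1, h1, e1⟩ := hp; obtain ⟨k2, h2, e2⟩ := hq
          have : k1 = k2 := by omega
          subst this
          rw [ihr h1 h2]

lemma closeIdx_inj {t : BinTree} {p q : List Bool} {k : ℕ}
    (hp : closeIdx t p = some k) (hq : closeIdx t q = some k) : p = q := by
  induction t generalizing p q k with
  | leaf => simp [closeIdx] at hp
  | node l r ihl ihr =>
    cases p with
    | nil =>
      simp only [closeIdx, Option.some_inj] at hp
      cases q with
      | nil => rfl
      | cons bb q =>
        cases bb <;> simp only [closeIdx, Option.map_eq_some_iff] at hq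
        · obtain ⟨k', h, e⟩ := hq
          have := closeIdx_lt_length h
          omega
        · obtain ⟨k', h, e⟩ := hq; omega
    | cons bb p =>
      cases q with
      | nil =>
        simp only [closeIdx, Option.some_inj] at hq
        cases bb <;> simp only [closeIdx, Option.map_eq_some_iff] at hp
        · obtain ⟨k', h, e⟩ := hp
          have := closeIdx_lt_length h
          omega
        · obtain ⟨k', h, e⟩ := hp; omega
      | cons bb' q =>
        cases bb <;> cases bb' <;>
          simp only [closeIdx, Option.map_eq_some_iff] at hp hq
        · obtain ⟨k1, h1, e1⟩ := hp; obtain ⟨k2, h2, e2⟩ := hq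
          have : k1 = k2 := by omega
          subst this
          rw [ihl h1 h2]
        · obtain ⟨k1, h1, e1⟩ := hp; obtain ⟨k2, h2, e2⟩ := hq
          have := closeIdx_lt_length h1
          omega
        · obtain ⟨k1, h1, e1⟩ := hp; obtain ⟨k2, h2, e2⟩ := hq
          have := closeIdx_lt_length h2
          omega
        · obtain ⟨k1, h1, e1⟩ := hp; obtain ⟨k2, h2, e2⟩ := hq
          have : k1 = k2 := by omega
          subst this
          rw [ihr h1 h2]

lemma openIdx_append_false {t : BinTree} {p : List Bool}
    (h : ValidPath t (p ++ [false])) :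
    ∃ k, openIdx t p = some k ∧ openIdx t (p ++ [false]) = some (k + 1) := by
  induction t generalizing p with
  | leaf => obtain ⟨l', r', h⟩ := h; cases p <;> simp_all [subtreeAt]
  | node l r ihl ihr =>
    cases p with
    | nil =>
      obtain ⟨l', r', h⟩ := h
      simp only [List.nil_append, subtreeAt] at h
      refine ⟨0, rfl, ?_⟩
      show (openIdx l []).map (· + 1) = some 1
      cases l with
      | leaf => simp [subtreeAt] at h
      | node a bb => simp [openIdx]
    | cons bb p =>
      obtain ⟨l', r', h⟩ := h
      cases bb
      · obtain ⟨k, hk, hk2⟩ := ihl ⟨l', r', h⟩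
        exact ⟨k + 1, by simp [openIdx, hk], by simp [openIdx, hk2]⟩
      · obtain ⟨k, hk, hk2⟩ := ihr ⟨l', r', h⟩
        refine ⟨k + (l.bp.length + 2), by simp [openIdx, hk], ?_⟩
        show (openIdx r (p ++ [false])).map (· + (l.bp.length + 2)) = _
        rw [hk2]
        simp; omega

lemma openIdx_append_true {t : BinTree} {p : List Bool}
    (h : ValidPath t (p ++ [true])) :
    ∃ k, closeIdx t p = some k ∧ openIdx t (p ++ [true]) = some (k + 1) := by
  induction t generalizing p with
  | leaf => obtain ⟨l', r', h⟩ := h; cases p <;> simp_all [subtreeAt]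
  | node l r ihl ihr =>
    cases p with
    | nil =>
      obtain ⟨l', r', h⟩ := h
      simp only [List.nil_append, subtreeAt] at h
      refine ⟨l.bp.length + 1, rfl, ?_⟩
      show (openIdx r []).map (· + (l.bp.length + 2)) = some (l.bp.length + 1 + 1)
      cases r with
      | leaf => simp [subtreeAt] at h
      | node a bb => simp [openIdx]
    | cons bb p =>
      obtain ⟨l', r', h⟩ := h
      cases bb
      · obtain ⟨k, hk, hk2⟩ := ihl ⟨l', r', h⟩
        exact ⟨k + 1, by simp [closeIdx, hk], by simp [openIdx, hk2]⟩
      · obtain ⟨k, hk, hk2⟩ := ihr ⟨l', r', h⟩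
        refine ⟨k + (l.bp.length + 2), by simp [closeIdx, hk], ?_⟩
        show (openIdx r (p ++ [true])).map (· + (l.bp.length + 2)) = _
        rw [hk2]
        simp; omega

end BinTree
namespace BinTree

lemma valid_append_false_of_get {t : BinTree} {p : List Bool} {k : ℕ}
    (ho : openIdx t p = some k) (hg : (bp t)[k + 1]? = some true) :
    ValidPath t (p ++ [false]) := by
  induction t generalizing p k with
  | leaf => simp [openIdx] at ho
  | node l r ihl ihr =>
    cases p with
    | nil =>
      simp only [openIdx, Option.some_inj] at ho
      subst ho
      cases l with
      | leaf => simp [bp] at hg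
      | node a b => exact ⟨a, b, rfl⟩
    | cons bb p =>
      cases bb
      · simp only [openIdx, Option.map_eq_some_iff] at ho
        obtain ⟨k0, hk0, rfl⟩ := ho
        have hlt : k0 < (bp l).length := openIdx_lt_length hk0
        have hg' : (bp l)[k0 + 1]? = some true := by
          rcases Nat.lt_or_ge (k0 + 1) (bp l).length with h | h
          · have : (bp (node l r))[k0 + 1 + 1]? = (bp l)[k0 + 1]? := by
              show (true :: (l.bp ++ false :: r.bp))[k0 + 1 + 1]? = _
              rw [List.getElem?_cons_succ, List.getElem?_append_left h]
            rw [← this]; exact hg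
          · have he : k0 + 1 = (bp l).length := by omega
            have : (bp (node l r))[k0 + 1 + 1]? = some false := by
              show (true :: (l.bp ++ false :: r.bp))[k0 + 1 + 1]? = _
              rw [List.getElem?_cons_succ, he, List.getElem?_append_right (le_refl _)]
              simp
            rw [this] at hg
            simp at hg
        obtain ⟨l', r', h⟩ := ihl hk0 hg'
        exact ⟨l', r', h⟩
      · simp only [openIdx, Option.map_eq_some_iff] at ho
        obtain ⟨k0, hk0, rfl⟩ := ho
        have hg' : (bp r)[k0 + 1]? = some true := by
          have : (bp (node l r))[k0 + (l.bp.length + 2) + 1]? = (bp r)[k0 + 1]? := by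
            show (true :: (l.bp ++ false :: r.bp))[k0 + (l.bp.length + 2) + 1]? = _
            have he : k0 + (l.bp.length + 2) + 1 = (k0 + l.bp.length + 2) + 1 := by omega
            rw [he, List.getElem?_cons_succ, List.getElem?_append_right (by omega)]
            have he2 : k0 + l.bp.length + 2 - l.bp.length = k0 + 2 := by omega
            rw [he2, List.getElem?_cons_succ]
          rw [← this]; exact hg
        obtain ⟨l', r', h⟩ := ihr hk0 hg'
        exact ⟨l', r', h⟩

lemma valid_append_true_of_get {t : BinTree} {p : List Bool} {k : ℕ}
    (hc : closeIdx t p = some k) (hg : (bp t)[k + 1]? = some true) :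
    ValidPath t (p ++ [true]) := by
  induction t generalizing p k with
  | leaf => simp [closeIdx] at hc
  | node l r ihl ihr =>
    cases p with
    | nil =>
      simp only [closeIdx, Option.some_inj] at hc
      subst hc
      have : (bp (node l r))[l.bp.length + 1 + 1]? = (bp r)[0]? := by
        show (true :: (l.bp ++ false :: r.bp))[l.bp.length + 1 + 1]? = _
        rw [List.getElem?_cons_succ, List.getElem?_append_right (by omega)]
        have he : l.bp.length + 1 - l.bp.length = 1 := by omega
        rw [he, List.getElem?_cons_succ]
      rw [this] at hg
      cases r with
      | leaf => simp [bp] at hg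
      | node a b => exact ⟨a, b, rfl⟩
    | cons bb p =>
      cases bb
      · simp only [closeIdx, Option.map_eq_some_iff] at hc
        obtain ⟨k0, hk0, rfl⟩ := hc
        have hlt : k0 < (bp l).length := closeIdx_lt_length hk0
        have hg' : (bp l)[k0 + 1]? = some true := by
          rcases Nat.lt_or_ge (k0 + 1) (bp l).length with h | h
          · have : (bp (node l r))[k0 + 1 + 1]? = (bp l)[k0 + 1]? := by
              show (true :: (l.bp ++ false :: r.bp))[k0 + 1 + 1]? = _
              rw [List.getElem?_cons_succ, List.getElem?_append_left h]
            rw [← this]; exact hg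
          · have he : k0 + 1 = (bp l).length := by omega
            have : (bp (node l r))[k0 + 1 + 1]? = some false := by
              show (true :: (l.bp ++ false :: r.bp))[k0 + 1 + 1]? = _
              rw [List.getElem?_cons_succ, he, List.getElem?_append_right (le_refl _)]
              simp
            rw [this] at hg
            simp at hg
        obtain ⟨l', r', h⟩ := ihl hk0 hg'
        exact ⟨l', r', h⟩
      · simp only [closeIdx, Option.map_eq_some_iff] at hc
        obtain ⟨k0, hk0, rfl⟩ := hc
        have hg' : (bp r)[k0 + 1]? = some true := by
          have : (bp (node l r))[k0 + (l.bp.length + 2) + 1]? = (bp r)[k0 + 1]? := by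
            show (true :: (l.bp ++ false :: r.bp))[k0 + (l.bp.length + 2) + 1]? = _
            have he : k0 + (l.bp.length + 2) + 1 = (k0 + l.bp.length + 2) + 1 := by omega
            rw [he, List.getElem?_cons_succ, List.getElem?_append_right (by omega)]
            have he2 : k0 + l.bp.length + 2 - l.bp.length = k0 + 2 := by omega
            rw [he2, List.getElem?_cons_succ]
          rw [← this]; exact hg
        obtain ⟨l', r', h⟩ := ihr hk0 hg'
        exact ⟨l', r', h⟩

lemma region_fit {t : BinTree} {p : List Bool} {u : BinTree} {k : ℕ}
    (hs : subtreeAt t p = some u) (ho : openIdx t p = some k) :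
    k + (bp u).length ≤ (bp t).length := by
  induction t generalizing p k with
  | leaf => simp [openIdx] at ho
  | node l r ihl ihr =>
    cases p with
    | nil =>
      simp only [subtreeAt, Option.some_inj] at hs
      simp only [openIdx, Option.some_inj] at ho
      subst hs; omega
    | cons bb p =>
      cases bb
      · simp only [openIdx, Option.map_eq_some_iff] at ho
        obtain ⟨k0, hk0, rfl⟩ := ho
        have := ihl hs hk0
        show k0 + 1 + (bp u).length ≤ (true :: (l.bp ++ false :: r.bp)).length
        simp only [List.length_cons, List.length_append]
        omega
      · simp only [openIdx, Option.map_eq_some_iff] at ho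
        obtain ⟨k0, hk0, rfl⟩ := ho
        have := ihr hs hk0
        show k0 + (l.bp.length + 2) + (bp u).length ≤ (true :: (l.bp ++ false :: r.bp)).length
        simp only [List.length_cons, List.length_append]
        omega

lemma region_iff {t : BinTree} {p q : List Bool} {u : BinTree} {k x : ℕ}
    (hs : subtreeAt t p = some u) (ho : openIdx t p = some k)
    (hx : openIdx t q = some x ∨ closeIdx t q = some x) :
    (k ≤ x ∧ x < k + (bp u).length) ↔ p <+: q := by
  induction t generalizing p q k x with
  | leaf => simp [openIdx] at ho
  | node l r ihl ihr =>
    cases p with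
    | nil =>
      simp only [subtreeAt, Option.some_inj] at hs
      simp only [openIdx, Option.some_inj] at ho
      subst hs; subst ho
      have hb : x < (bp (node l r)).length := by
        rcases hx with h | h
        · exact openIdx_lt_length h
        · exact closeIdx_lt_length h
      exact iff_of_true ⟨Nat.zero_le _, by simpa using hb⟩ (List.nil_prefix)
    | cons bb p =>
      cases bb
      · simp only [openIdx, Option.map_eq_some_iff] at ho
        obtain ⟨k0, hk0, rfl⟩ := ho
        have hfit : k0 + (bp u).length ≤ (bp l).length := region_fit hs hk0
        cases q with
        | nil =>
          apply iff_of_false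
          · rintro ⟨h1, h2⟩
            rcases hx with h | h
            · simp only [openIdx, Option.some_inj] at h; omega
            · simp only [closeIdx, Option.some_inj] at h; omega
          · intro h
            exact absurd (List.IsPrefix.length_le h) (by simp)
        | cons bb' q =>
          cases bb'
          · have hx' : ∃ x0, (openIdx l q = some x0 ∨ closeIdx l q = some x0) ∧ x = x0 + 1 := by
              rcases hx with h | h
              · simp only [openIdx, Option.map_eq_some_iff] at h
                obtain ⟨x0, h1, h2⟩ := h
                exact ⟨x0, Or.inl h1, h2.symm⟩
              · simp only [closeIdx, Option.map_eq_some_iff] at h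
                obtain ⟨x0, h1, h2⟩ := h
                exact ⟨x0, Or.inr h1, h2.symm⟩
            obtain ⟨x0, hx0, rfl⟩ := hx'
            have := ihl hs hk0 (q := q) (x := x0) hx0
            rw [List.cons_prefix_cons]
            constructor
            · rintro ⟨h1, h2⟩
              exact ⟨rfl, this.mp ⟨by omega, by omega⟩⟩
            · rintro ⟨-, h⟩
              have := this.mpr h
              omega
          · apply iff_of_false
            · rintro ⟨h1, h2⟩
              have hx' : ∃ x0, x = x0 + (l.bp.length + 2) := by
                rcases hx with h | h
                · simp only [openIdx, Option.map_eq_some_iff] at h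
                  obtain ⟨x0, -, h2⟩ := h
                  exact ⟨x0, h2.symm⟩
                · simp only [closeIdx, Option.map_eq_some_iff] at h
                  obtain ⟨x0, -, h2⟩ := h
                  exact ⟨x0, h2.symm⟩
              obtain ⟨x0, rfl⟩ := hx'
              omega
            · intro h
              rw [List.cons_prefix_cons] at h
              exact absurd h.1 (by simp)
      · simp only [openIdx, Option.map_eq_some_iff] at ho
        obtain ⟨k0, hk0, rfl⟩ := ho
        cases q with
        | nil =>
          apply iff_of_false
          · rintro ⟨h1, h2⟩
            rcases hx with h | h
            · simp only [openIdx, Option.some_inj] at h; omega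
            · simp only [closeIdx, Option.some_inj] at h; omega
          · intro h
            exact absurd (List.IsPrefix.length_le h) (by simp)
        | cons bb' q =>
          cases bb'
          · apply iff_of_false
            · rintro ⟨h1, h2⟩
              have hx' : ∃ x0, x = x0 + 1 ∧ x0 < (bp l).length := by
                rcases hx with h | h
                · simp only [openIdx, Option.map_eq_some_iff] at h
                  obtain ⟨x0, h1', h2'⟩ := h
                  exact ⟨x0, h2'.symm, openIdx_lt_length h1'⟩
                · simp only [closeIdx, Option.map_eq_some_iff] at h
                  obtain ⟨x0, h1', h2'⟩ := h
                  exact ⟨x0, h2'.symm, closeIdx_lt_length h1'⟩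
              obtain ⟨x0, rfl, hlt⟩ := hx'
              omega
            · intro h
              rw [List.cons_prefix_cons] at h
              exact absurd h.1 (by simp)
          · have hx' : ∃ x0, (openIdx r q = some x0 ∨ closeIdx r q = some x0) ∧
                x = x0 + (l.bp.length + 2) := by
              rcases hx with h | h
              · simp only [openIdx, Option.map_eq_some_iff] at h
                obtain ⟨x0, h1, h2⟩ := h
                exact ⟨x0, Or.inl h1, h2.symm⟩
              · simp only [closeIdx, Option.map_eq_some_iff] at h
                obtain ⟨x0, h1, h2⟩ := h
                exact ⟨x0, Or.inr h1, h2.symm⟩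
            obtain ⟨x0, hx0, rfl⟩ := hx'
            have := ihr hs hk0 (q := q) (x := x0) hx0
            rw [List.cons_prefix_cons]
            constructor
            · rintro ⟨h1, h2⟩
              exact ⟨rfl, this.mp ⟨by omega, by omega⟩⟩
            · rintro ⟨-, h⟩
              have := this.mpr h
              omega

lemma strict_inside {t : BinTree} {w v : List Bool} {o c x : ℕ}
    (ho : openIdx t w = some o) (hc : closeIdx t w = some c)
    (hx : openIdx t v = some x ∨ closeIdx t v = some x)
    (h1 : o < x) (h2 : x < c) : w <+: v ∧ w ≠ v := by
  obtain ⟨ul, ur, hs⟩ := openIdx_valid ho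
  obtain ⟨ul', ur', he, hc'⟩ := open_close_subtree hs ho
  injection he with e1 e2
  subst e1
  subst e2
  rw [hc'] at hc
  simp only [Option.some_inj] at hc
  subst hc
  cases ul with
  | leaf => simp [bp] at h1 h2; omega
  | node a bbb =>
    have hval : ValidPath t (w ++ [false]) := by
      refine ⟨a, bbb, ?_⟩
      rw [subtreeAt_append, hs]
      simp [subtreeAt]
    obtain ⟨o', ho', hof⟩ := openIdx_append_false hval
    rw [ho] at ho'
    injection ho' with e
    subst e
    have hsub : subtreeAt t (w ++ [false]) = some (node a bbb) := by
      rw [subtreeAt_append, hs]; simp [subtreeAt]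
    have hreg := region_iff hsub hof hx
    have hpre : (w ++ [false]) <+: v := by
      apply hreg.mp
      simp only [bp, List.length_cons, List.length_append] at h2 ⊢
      exact ⟨by omega, by omega⟩
    refine ⟨(List.prefix_append w [false]).trans hpre, ?_⟩
    rintro rfl
    have := List.IsPrefix.length_le hpre
    simp at this
end BinTree
namespace BinTree

lemma paren_surj {t : BinTree} {x : ℕ} (hx : x < (bp t).length) :
    ∃ p, openIdx t p = some x ∨ closeIdx t p = some x := by
  induction t generalizing x with
  | leaf => simp [bp] at hx
  | node l r ihl ihr =>
    have hlen : (bp (node l r)).length = l.bp.length + r.bp.length + 2 := by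
      simp [bp]; omega
    rcases Nat.eq_zero_or_pos x with rfl | hpos
    · exact ⟨[], Or.inl rfl⟩
    rcases Nat.lt_or_ge x (l.bp.length + 1) with h | h
    · obtain ⟨p, hp⟩ := ihl (x := x - 1) (by omega)
      refine ⟨false :: p, ?_⟩
      rcases hp with hp | hp
      · left
        show (openIdx l p).map (· + 1) = some x
        rw [hp]; simp; omega
      · right
        show (closeIdx l p).map (· + 1) = some x
        rw [hp]; simp; omega
    rcases Nat.eq_or_lt_of_le h with he | h2
    · refine ⟨[], Or.inr ?_⟩
      show some (l.bp.length + 1) = some x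
      rw [he]
    · obtain ⟨p, hp⟩ := ihr (x := x - (l.bp.length + 2)) (by omega)
      refine ⟨true :: p, ?_⟩
      rcases hp with hp | hp
      · left
        show (openIdx r p).map (· + (l.bp.length + 2)) = some x
        rw [hp]; simp; omega
      · right
        show (closeIdx r p).map (· + (l.bp.length + 2)) = some x
        rw [hp]; simp; omega

lemma prefix_openIdx_le {t : BinTree} {p q : List Bool} {k x : ℕ}
    (hpre : p <+: q) (ho : openIdx t p = some k)
    (hx : openIdx t q = some x ∨ closeIdx t q = some x) : k ≤ x := by
  obtain ⟨l', r', hs⟩ := openIdx_valid ho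
  exact ((region_iff hs ho hx).mpr hpre).1

lemma bp_count_eq (t : BinTree) : (bp t).count true = (bp t).count false := by
  induction t with
  | leaf => rfl
  | node l r ihl ihr =>
    show (true :: (l.bp ++ false :: r.bp)).count true =
      (true :: (l.bp ++ false :: r.bp)).count false
    simp only [List.count_cons, List.count_append]
    simp
    omega

lemma bp_take_le (t : BinTree) (k : ℕ) :
    ((bp t).take k).count false ≤ ((bp t).take k).count true := by
  induction t generalizing k with
  | leaf => simp [bp]
  | node l r ihl ihr =>
    cases k with
    | zero => simp
    | succ k =>
      show ((true :: (l.bp ++ false :: r.bp)).take (k + 1)).count false ≤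
        ((true :: (l.bp ++ false :: r.bp)).take (k + 1)).count true
      rw [List.take_succ_cons, List.take_append]
      rcases Nat.lt_or_ge k l.bp.length with h | h
      · have h0 : k - l.bp.length = 0 := by omega
        rw [h0]
        simp only [List.take_zero, List.append_nil, List.count_cons, List.count_append]
        have := ihl k
        simp
        omega
      · rw [List.take_of_length_le h]
        obtain ⟨m, hm⟩ : ∃ m, k - l.bp.length = m := ⟨_, rfl⟩
        rw [hm]
        cases m with
        | zero =>
          simp only [List.take_zero, List.append_nil, List.count_cons, List.count_append]
          have := bp_count_eq l
          simp
          omega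
        | succ m =>
          rw [List.take_succ_cons]
          simp only [List.count_cons, List.count_append]
          have h1 := bp_count_eq l
          have h2 := ihr m
          simp
          omega

lemma bp_balanced (t : BinTree) : BalancedBP (bp t) :=
  ⟨bp_count_eq t, fun k => bp_take_le t k⟩

end BinTree

lemma excess_nonneg_bp (t : BinTree) (n : ℕ) : 0 ≤ excess (BinTree.bp t) n := by
  unfold excess
  have := BinTree.bp_take_le t n
  omega

lemma excess_shift_left (u v : List Bool) (n : ℕ) (hn : n ≤ u.length) :
    excess (true :: (u ++ false :: v)) (n + 1) = 1 + excess u n := by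
  unfold excess
  rw [List.take_succ_cons, List.take_append]
  have h0 : n - u.length = 0 := by omega
  rw [h0]
  simp only [List.take_zero, List.append_nil, List.count_cons]
  simp
  ring

lemma excess_shift_right (u v : List Bool) (n : ℕ)
    (hu : u.count true = u.count false) :
    excess (true :: (u ++ false :: v)) (u.length + 2 + n) = excess v n := by
  unfold excess
  have he : u.length + 2 + n = (u.length + 1 + n) + 1 := by omega
  rw [he, List.take_succ_cons, List.take_append]
  rw [List.take_of_length_le (by omega)]
  have h1 : u.length + 1 + n - u.length = n + 1 := by omega
  rw [h1, List.take_succ_cons]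
  simp only [List.count_cons, List.count_append]
  simp
  omega

namespace BinTree

lemma excess_open_close {t : BinTree} {p : List Bool} {k c : ℕ}
    (ho : openIdx t p = some k) (hc : closeIdx t p = some c) :
    excess (bp t) (c + 1) = excess (bp t) k ∧
      ∀ n, k < n → n ≤ c → excess (bp t) k < excess (bp t) n := by
  induction t generalizing p k c with
  | leaf => simp [openIdx] at ho
  | node l r ihl ihr =>
    have hbp : bp (node l r) = true :: (l.bp ++ false :: r.bp) := rfl
    cases p with
    | nil =>
      simp only [openIdx, Option.some_inj] at ho
      simp only [closeIdx, Option.some_inj] at hc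
      subst ho; subst hc
      constructor
      · have h1 : l.bp.length + 1 + 1 = l.bp.length + 2 + 0 := by omega
        rw [hbp, h1, excess_shift_right _ _ _ (bp_count_eq l)]
        simp [excess]
      · intro n hn1 hn2
        obtain ⟨m, rfl⟩ : ∃ m, n = m + 1 := ⟨n - 1, by omega⟩
        rw [hbp, excess_shift_left _ _ _ (by omega)]
        have h2 := excess_nonneg_bp l m
        have h4 : excess (true :: (l.bp ++ false :: r.bp)) 0 = 0 := by simp [excess]
        rw [h4]
        omega
    | cons bb p =>
      cases bb
      · simp only [openIdx, Option.map_eq_some_iff] at ho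
        simp only [closeIdx, Option.map_eq_some_iff] at hc
        obtain ⟨k0, hk0, rfl⟩ := ho
        obtain ⟨c0, hc0, rfl⟩ := hc
        have hcl : c0 < l.bp.length := closeIdx_lt_length hc0
        have hkl : k0 < l.bp.length := openIdx_lt_length hk0
        obtain ⟨ih1, ih2⟩ := ihl hk0 hc0
        constructor
        · rw [hbp, excess_shift_left _ _ _ (by omega), excess_shift_left _ _ _ (by omega)]
          rw [ih1]
        · intro n hn1 hn2
          obtain ⟨m, rfl⟩ : ∃ m, n = m + 1 := ⟨n - 1, by omega⟩
          rw [hbp, excess_shift_left _ _ _ (by omega), excess_shift_left _ _ _ (by omega)]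
          have := ih2 m (by omega) (by omega)
          omega
      · simp only [openIdx, Option.map_eq_some_iff] at ho
        simp only [closeIdx, Option.map_eq_some_iff] at hc
        obtain ⟨k0, hk0, rfl⟩ := ho
        obtain ⟨c0, hc0, rfl⟩ := hc
        have hcr : c0 < r.bp.length := closeIdx_lt_length hc0
        obtain ⟨ih1, ih2⟩ := ihr hk0 hc0
        constructor
        · have h1 : c0 + (l.bp.length + 2) + 1 = l.bp.length + 2 + (c0 + 1) := by omega
          have h2 : k0 + (l.bp.length + 2) = l.bp.length + 2 + k0 := by omega
          rw [hbp, h1, h2, excess_shift_right _ _ _ (bp_count_eq l),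
            excess_shift_right _ _ _ (bp_count_eq l)]
          exact ih1
        · intro n hn1 hn2
          obtain ⟨m, hm⟩ : ∃ m, n = l.bp.length + 2 + m := ⟨n - (l.bp.length + 2), by omega⟩
          subst hm
          have h2 : k0 + (l.bp.length + 2) = l.bp.length + 2 + k0 := by omega
          rw [hbp, h2, excess_shift_right _ _ _ (bp_count_eq l),
            excess_shift_right _ _ _ (bp_count_eq l)]
          exact ih2 m (by omega) (by omega)

lemma isMatch_open_close {t : BinTree} {p : List Bool} {k c : ℕ}
    (ho : openIdx t p = some k) (hc : closeIdx t p = some c) :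
    IsMatch (bp t) k c := by
  obtain ⟨h1, h2⟩ := excess_open_close ho hc
  exact ⟨open_lt_close ho hc, closeIdx_lt_length hc, openIdx_get ho, closeIdx_get hc, h1, h2⟩

end BinTree

lemma isMatch_unique {s : List Bool} {k c c' : ℕ}
    (h : IsMatch s k c) (h' : IsMatch s k c') : c = c' := by
  have hk1 := h.1
  have hk2 := h'.1
  by_contra hne
  rcases Nat.lt_or_ge c c' with hlt | hge
  · have := h'.2.2.2.2.2 (c + 1) (by omega) (by omega)
    rw [h.2.2.2.2.1] at this
    exact lt_irrefl _ this
  · have hlt : c' < c := by omega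
    have := h.2.2.2.2.2 (c' + 1) (by omega) (by omega)
    rw [h'.2.2.2.2.1] at this
    exact lt_irrefl _ this
lemma exists_tree_of_balanced :
    ∀ (n : ℕ) (s : List Bool), s.length ≤ n → BalancedBP s → ∃ T : BinTree, T.bp = s := by
  intro n
  induction n using Nat.strong_induction_on with
  | _ n ih =>
    intro s hlen hb
    rcases s with _ | ⟨x, s'⟩
    · exact ⟨BinTree.leaf, rfl⟩
    have hx : x = true := by
      have h1 := hb.2 1
      cases x
      · simp [List.take, List.count_cons] at h1
      · rfl
    subst hx
    set s : List Bool := true :: s' with hs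
    have hP : 0 < s.length ∧
        ((s.take s.length).count true = (s.take s.length).count false) := by
      constructor
      · simp [hs]
      · rw [List.take_length]
        exact hb.1
    have hPex : ∃ n0, 0 < n0 ∧ ((s.take n0).count true = (s.take n0).count false) :=
      ⟨s.length, hP⟩
    classical
    obtain ⟨hn0pos, hn0eq⟩ : 0 < Nat.find hPex ∧
        ((s.take (Nat.find hPex)).count true = (s.take (Nat.find hPex)).count false) :=
      Nat.find_spec hPex
    set n0 := Nat.find hPex with hn0def
    have hn0le : n0 ≤ s.length := Nat.find_min' hPex hP
    have hstrict : ∀ m, 0 < m → m < n0 →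
        (s.take m).count false < (s.take m).count true := by
      intro m hm1 hm2
      have h1 := hb.2 m
      have h2 := Nat.find_min hPex hm2
      rcases Nat.lt_or_ge ((s.take m).count false) ((s.take m).count true) with h | h
      · exact h
      · exact absurd ⟨hm1, Nat.le_antisymm h h1⟩ h2
    have hn02 : 2 ≤ n0 := by
      by_contra h
      push_neg at h
      have h1 : n0 = 1 := by omega
      rw [h1] at hn0eq
      rw [hs] at hn0eq
      simp [List.take, List.count_cons] at hn0eq
    have hslen : 2 ≤ s.length := by omega
    have hs'len : s'.length + 1 = s.length := by simp [hs]
    have htake : s.take n0 = s.take (n0 - 1) ++ [s[n0 - 1]'(by omega)] := by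
      have h1 : n0 = (n0 - 1) + 1 := by omega
      conv_lhs => rw [h1]
      rw [List.take_succ]
      congr 1
      rw [List.getElem?_eq_getElem (by omega)]
      rfl
    have hglast : s[n0 - 1]'(by omega) = false := by
      by_contra hgl
      have hgl' : s[n0 - 1]'(by omega) = true := by
        cases hgl2 : s[n0 - 1]'(by omega)
        · exact absurd hgl2 hgl
        · rfl
      rw [htake, hgl'] at hn0eq
      simp only [List.count_append, List.count_cons, List.count_nil] at hn0eq
      have h3 := hstrict (n0 - 1) (by omega) (by omega)
      simp at hn0eq
      omega
    have hcnt1 : (s.take (n0 - 1)).count true = (s.take (n0 - 1)).count false + 1 := by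
      rw [htake, hglast] at hn0eq
      simp only [List.count_append, List.count_cons, List.count_nil] at hn0eq
      have h3 := hstrict (n0 - 1) (by omega) (by omega)
      simp at hn0eq
      omega
    set u : List Bool := s'.take (n0 - 2) with hu
    set v : List Bool := s.drop n0 with hv
    have hulen : u.length = n0 - 2 := by
      rw [hu, List.length_take]
      omega
    have hvlen : v.length = s.length - n0 := by
      rw [hv, List.length_drop]
    have htakeu : ∀ m, m ≤ n0 - 2 → s.take (m + 1) = true :: u.take m := by
      intro m hm
      conv_lhs => rw [hs]
      rw [List.take_succ_cons]
      congr 1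
      rw [hu, List.take_take]
      congr 1
      omega
    have htake1 : s.take (n0 - 1) = true :: u := by
      have h1 := htakeu (n0 - 2) (le_refl _)
      have h2 : u.take (n0 - 2) = u := List.take_of_length_le (by omega)
      rw [h2] at h1
      have he : n0 - 2 + 1 = n0 - 1 := by omega
      rw [he] at h1
      exact h1
    have hdec : s = true :: (u ++ false :: v) := by
      conv_lhs => rw [← List.take_append_drop n0 s]
      rw [htake, hglast, htake1, hv]
      simp
    have hutotal : u.count true = u.count false := by
      rw [htake1] at hcnt1
      simp only [List.count_cons] at hcnt1
      simp at hcnt1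
      omega
    have hbu : BalancedBP u := by
      refine ⟨hutotal, fun m => ?_⟩
      rcases Nat.lt_or_ge m u.length with hm | hm
      · have h1 := hstrict (m + 1) (by omega) (by omega)
        rw [htakeu m (by omega)] at h1
        simp only [List.count_cons] at h1
        simp at h1
        omega
      · rw [List.take_of_length_le hm]
        omega
    have htakev : ∀ m, s.take (n0 + m) = true :: (u ++ false :: v.take m) := by
      intro m
      conv_lhs => rw [hdec]
      have he : n0 + m = (n0 - 1 + m) + 1 := by omega
      rw [he, List.take_succ_cons]
      congr 1
      rw [List.take_append]
      rw [List.take_of_length_le (by omega)]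
      congr 1
      have he2 : n0 - 1 + m - u.length = m + 1 := by omega
      rw [he2, List.take_succ_cons]
    have hvtotal : v.count true = v.count false := by
      have h1 := hb.1
      rw [hdec] at h1
      simp only [List.count_cons, List.count_append] at h1
      simp at h1
      omega
    have hbv : BalancedBP v := by
      refine ⟨hvtotal, fun m => ?_⟩
      have h1 := hb.2 (n0 + m)
      rw [htakev m] at h1
      simp only [List.count_cons, List.count_append] at h1
      simp at h1
      omega
    obtain ⟨Tu, hTu⟩ := ih u.length (by omega) u (le_refl _) hbu
    obtain ⟨Tv, hTv⟩ := ih v.length (by omega) v (le_refl _) hbv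
    refine ⟨BinTree.node Tu Tv, ?_⟩
    show true :: (Tu.bp ++ false :: Tv.bp) = s
    rw [hTu, hTv, ← hdec]
section Tokens

def tokensHyp {m : ℕ} (KT KF : Fin m → ℕ) (L : List (ℕ × Bool)) : Prop :=
  (L : Multiset (ℕ × Bool)) =
    Multiset.map (fun i => (KT i, true)) Finset.univ.val +
    Multiset.map (fun i => (KF i, false)) Finset.univ.val

variable {m : ℕ} {KT KF : Fin m → ℕ} {L : List (ℕ × Bool)}

lemma tok_mem_T (h : tokensHyp KT KF L) (i : Fin m) : (KT i, true) ∈ L := by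
  have h2 : (KT i, true) ∈ (L : Multiset (ℕ × Bool)) := by
    rw [h]
    simp only [Multiset.mem_add, Multiset.mem_map]
    left
    exact ⟨i, by simp⟩
  simpa using h2

lemma tok_mem_F (h : tokensHyp KT KF L) (i : Fin m) : (KF i, false) ∈ L := by
  have h2 : (KF i, false) ∈ (L : Multiset (ℕ × Bool)) := by
    rw [h]
    simp only [Multiset.mem_add, Multiset.mem_map]
    right
    exact ⟨i, by simp⟩
  simpa using h2

lemma tok_cases (h : tokensHyp KT KF L) {e : ℕ × Bool} (he : e ∈ L) :
    (∃ i, e = (KT i, true)) ∨ (∃ i, e = (KF i, false)) := by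
  have h2 : e ∈ (L : Multiset (ℕ × Bool)) := by simpa using he
  rw [h] at h2
  simp only [Multiset.mem_add, Multiset.mem_map, Finset.mem_val] at h2
  rcases h2 with ⟨i, -, hi⟩ | ⟨i, -, hi⟩
  · exact Or.inl ⟨i, hi.symm⟩
  · exact Or.inr ⟨i, hi.symm⟩

lemma keys_multiset (h : tokensHyp KT KF L) :
    (L.map Prod.fst : Multiset ℕ) =
      Multiset.map KT Finset.univ.val + Multiset.map KF Finset.univ.val := by
  have h2 : (L.map Prod.fst : Multiset ℕ) = Multiset.map Prod.fst (L : Multiset (ℕ × Bool)) := by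
    simp
  rw [h2, h, Multiset.map_add, Multiset.map_map, Multiset.map_map]
  rfl

lemma key_injs (h : tokensHyp KT KF L) (hnd : (L.map Prod.fst).Nodup) :
    Function.Injective KT ∧ Function.Injective KF ∧ ∀ i j, KT i ≠ KF j := by
  have hmnd : (L.map Prod.fst : Multiset ℕ).Nodup := by simpa using hnd
  rw [keys_multiset h] at hmnd
  obtain ⟨h1, h2, h3⟩ := Multiset.nodup_add.mp hmnd
  refine ⟨?_, ?_, ?_⟩
  · intro i j hij
    exact Multiset.inj_on_of_nodup_map h1 i (by simp) j (by simp) hij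
  · intro i j hij
    exact Multiset.inj_on_of_nodup_map h2 i (by simp) j (by simp) hij
  · intro i j hij
    have hT : KT i ∈ Multiset.map KT Finset.univ.val :=
      Multiset.mem_map_of_mem _ (by simp)
    have hF : KT i ∈ Multiset.map KF Finset.univ.val := by
      rw [hij]
      exact Multiset.mem_map_of_mem _ (by simp)
    exact Multiset.disjoint_left.mp h3 hT hF

lemma entry_eq_of_key (hnd : (L.map Prod.fst).Nodup) {e e' : ℕ × Bool}
    (h1 : e ∈ L) (h2 : e' ∈ L) (hk : e.1 = e'.1) : e = e' :=
  List.inj_on_of_nodup_map hnd h1 h2 hk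

lemma sorted_key_lt_iff (hsorted : (L.map Prod.fst).Pairwise (· < ·))
    {n n' : ℕ} (hn : n < L.length) (hn' : n' < L.length) :
    L[n].1 < L[n'].1 ↔ n < n' := by
  have key : ∀ {u v : ℕ} (hu : u < L.length) (hv : v < L.length), u < v → L[u].1 < L[v].1 := by
    intro u v hu hv huv
    have := List.pairwise_iff_getElem.mp hsorted u v (by simpa using hu) (by simpa using hv) huv
    simpa using this
  constructor
  · intro hlt
    rcases Nat.lt_trichotomy n n' with h | h | h
    · exact h
    · subst h; exact absurd hlt (lt_irrefl _)
    · exact absurd (key hn' hn h) (by omega)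
  · exact key hn hn'

lemma sorted_key_inj (hsorted : (L.map Prod.fst).Pairwise (· < ·))
    {n n' : ℕ} (hn : n < L.length) (hn' : n' < L.length) (h : L[n].1 = L[n'].1) : n = n' := by
  rcases Nat.lt_trichotomy n n' with hc | hc | hc
  · have := (sorted_key_lt_iff hsorted hn hn').mpr hc; omega
  · exact hc
  · have := (sorted_key_lt_iff hsorted hn' hn).mpr hc; omega

/-- Index in `L` of the entry with key `x`. -/
def keyIdx (L : List (ℕ × Bool)) (x : ℕ) : ℕ := (L.map Prod.fst).idxOf x

lemma keyIdx_lt {x : ℕ} (hx : x ∈ L.map Prod.fst) : keyIdx L x < L.length := by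
  have := List.idxOf_lt_length_iff.mpr hx
  simpa [keyIdx] using this

lemma keyIdx_key {x : ℕ} (hx : x ∈ L.map Prod.fst) :
    (L[keyIdx L x]'(keyIdx_lt hx)).1 = x := by
  have h1 : (L.map Prod.fst)[keyIdx L x]'(by simpa [keyIdx] using List.idxOf_lt_length_iff.mpr hx) = x :=
    List.getElem_idxOf _
  rw [List.getElem_map] at h1
  exact h1

lemma keyIdx_of_idx (hsorted : (L.map Prod.fst).Pairwise (· < ·)) {n : ℕ} (hn : n < L.length) :
    keyIdx L (L[n].1) = n := by
  have hmem : L[n].1 ∈ L.map Prod.fst := List.mem_map_of_mem (List.getElem_mem _)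
  exact sorted_key_inj hsorted (keyIdx_lt hmem) hn (keyIdx_key hmem)

lemma entry_T (h : tokensHyp KT KF L) (hnd : (L.map Prod.fst).Nodup) (i : Fin m) :
    L[keyIdx L (KT i)]'(keyIdx_lt (List.mem_map_of_mem (tok_mem_T h i))) = (KT i, true) := by
  have hmem : KT i ∈ L.map Prod.fst := List.mem_map_of_mem (tok_mem_T h i)
  exact entry_eq_of_key hnd (List.getElem_mem _) (tok_mem_T h i) (keyIdx_key hmem)

lemma entry_F (h : tokensHyp KT KF L) (hnd : (L.map Prod.fst).Nodup) (i : Fin m) :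
    L[keyIdx L (KF i)]'(keyIdx_lt (List.mem_map_of_mem (tok_mem_F h i))) = (KF i, false) := by
  have hmem : KF i ∈ L.map Prod.fst := List.mem_map_of_mem (tok_mem_F h i)
  exact entry_eq_of_key hnd (List.getElem_mem _) (tok_mem_F h i) (keyIdx_key hmem)

lemma keyIdx_lt_keyIdx (hsorted : (L.map Prod.fst).Pairwise (· < ·))
    {x y : ℕ} (hx : x ∈ L.map Prod.fst) (hy : y ∈ L.map Prod.fst) :
    keyIdx L x < keyIdx L y ↔ x < y := by
  constructor
  · intro h
    have h2 := (sorted_key_lt_iff hsorted (keyIdx_lt hx) (keyIdx_lt hy)).mpr h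
    rwa [keyIdx_key hx, keyIdx_key hy] at h2
  · intro h
    apply (sorted_key_lt_iff hsorted (keyIdx_lt hx) (keyIdx_lt hy)).mp
    rwa [keyIdx_key hx, keyIdx_key hy]

end Tokens
section Tokens2

lemma sorted_take_filter_le :
    ∀ (L : List (ℕ × Bool)), (L.map Prod.fst).Pairwise (· < ·) → ∀ n, ∀ hn : n < L.length,
      L.take (n + 1) = L.filter (fun e => decide (e.1 ≤ L[n].1)) := by
  intro L
  induction L with
  | nil => intro _ n hn; simp at hn
  | cons e L ih =>
    intro hs n hn
    have hs2 : (e.1 :: L.map Prod.fst).Pairwise (· < ·) := by simpa using hs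
    have hhead : ∀ e' ∈ L, e.1 < e'.1 := by
      intro e' he'
      exact (List.pairwise_cons.mp hs2).1 e'.1 (List.mem_map_of_mem he')
    have hs' : (L.map Prod.fst).Pairwise (· < ·) := (List.pairwise_cons.mp hs2).2
    cases n with
    | zero =>
      simp only [List.take_succ_cons, List.take_zero, List.getElem_cons_zero]
      rw [List.filter_cons_of_pos (by simp)]
      have h0 : L.filter (fun e' => decide (e'.1 ≤ e.1)) = [] := by
        rw [List.filter_eq_nil_iff]
        intro e' he'
        have := hhead e' he'
        simp
        omega
      rw [h0]
    | succ n =>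
      have hn' : n < L.length := by simpa using hn
      simp only [List.take_succ_cons, List.getElem_cons_succ]
      rw [List.filter_cons_of_pos, ih hs' n hn']
      have := hhead _ (List.getElem_mem hn')
      simp
      omega

lemma sorted_take_filter_lt :
    ∀ (L : List (ℕ × Bool)), (L.map Prod.fst).Pairwise (· < ·) → ∀ n, ∀ hn : n < L.length,
      L.take n = L.filter (fun e => decide (e.1 < L[n].1)) := by
  intro L
  induction L with
  | nil => intro _ n hn; simp at hn
  | cons e L ih =>
    intro hs n hn
    have hs2 : (e.1 :: L.map Prod.fst).Pairwise (· < ·) := by simpa using hs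
    have hhead : ∀ e' ∈ L, e.1 < e'.1 := by
      intro e' he'
      exact (List.pairwise_cons.mp hs2).1 e'.1 (List.mem_map_of_mem he')
    have hs' : (L.map Prod.fst).Pairwise (· < ·) := (List.pairwise_cons.mp hs2).2
    cases n with
    | zero =>
      simp only [List.take_zero, List.getElem_cons_zero]
      symm
      rw [List.filter_eq_nil_iff]
      intro e' he'
      rcases List.mem_cons.mp he' with rfl | he''
      · simp
      · have := hhead e' he''
        simp
        omega
    | succ n =>
      have hn' : n < L.length := by simpa using hn
      simp only [List.take_succ_cons, List.getElem_cons_succ]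
      rw [List.filter_cons_of_pos, ih hs' n hn']
      have := hhead _ (List.getElem_mem hn')
      simp
      omega

lemma count_map_snd_true (l : List (ℕ × Bool)) :
    (l.map Prod.snd).count true = l.countP (fun e => e.2) := by
  induction l with
  | nil => rfl
  | cons e l ih =>
    simp only [List.map_cons, List.count_cons, List.countP_cons, ih]
    cases h : e.2 <;> simp

lemma count_map_snd_false (l : List (ℕ × Bool)) :
    (l.map Prod.snd).count false = l.countP (fun e => !e.2) := by
  induction l with
  | nil => rfl
  | cons e l ih =>
    simp only [List.map_cons, List.count_cons, List.countP_cons, ih]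
    cases h : e.2 <;> simp

variable {m : ℕ} {KT KF : Fin m → ℕ} {L : List (ℕ × Bool)}

lemma countP_tokens (h : tokensHyp KT KF L) (p : ℕ × Bool → Bool) :
    L.countP p = (Finset.univ.filter (fun i => p (KT i, true) = true)).card +
      (Finset.univ.filter (fun i => p (KF i, false) = true)).card := by
  classical
  have h1 : (L : Multiset (ℕ × Bool)).countP (fun e => p e = true) = L.countP p := by
    rw [Multiset.coe_countP]
    congr 1
    funext e
    cases p e <;> simp
  rw [← h1, h, Multiset.countP_add, Multiset.countP_map, Multiset.countP_map]
  rfl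

lemma excess_take_succ (h : tokensHyp KT KF L)
    (hsorted : (L.map Prod.fst).Pairwise (· < ·)) {n : ℕ} (hn : n < L.length) :
    excess (L.map Prod.snd) (n + 1) =
      ((Finset.univ.filter (fun i => KT i ≤ L[n].1)).card : ℤ) -
        ((Finset.univ.filter (fun i => KF i ≤ L[n].1)).card : ℤ) := by
  classical
  unfold excess
  rw [← List.map_take, count_map_snd_true, count_map_snd_false,
    sorted_take_filter_le L hsorted n hn, List.countP_filter, List.countP_filter,
    countP_tokens h, countP_tokens h]
  congr 2 <;> simp

lemma excess_take_idx (h : tokensHyp KT KF L)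
    (hsorted : (L.map Prod.fst).Pairwise (· < ·)) {n : ℕ} (hn : n < L.length) :
    excess (L.map Prod.snd) n =
      ((Finset.univ.filter (fun i => KT i < L[n].1)).card : ℤ) -
        ((Finset.univ.filter (fun i => KF i < L[n].1)).card : ℤ) := by
  classical
  unfold excess
  rw [← List.map_take, count_map_snd_true, count_map_snd_false,
    sorted_take_filter_lt L hsorted n hn, List.countP_filter, List.countP_filter,
    countP_tokens h, countP_tokens h]
  congr 2 <;> simp

end Tokens2
section Tokens3

variable {m : ℕ} {KT KF : Fin m → ℕ} {L : List (ℕ × Bool)}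

lemma card_filter_le_split (K : Fin m → ℕ) (X Y : ℕ) (hXY : X ≤ Y) :
    (Finset.univ.filter (fun i => K i ≤ Y)).card =
      (Finset.univ.filter (fun i => K i < X)).card +
        (Finset.univ.filter (fun i => X ≤ K i ∧ K i ≤ Y)).card := by
  classical
  rw [← Finset.card_union_of_disjoint]
  · congr 1
    rw [← Finset.filter_or]
    apply Finset.filter_congr
    intro i _
    constructor
    · intro hh
      by_cases hc : K i < X
      · exact Or.inl hc
      · exact Or.inr ⟨by omega, hh⟩
    · rintro (hh | ⟨h1, h2⟩)
      · omega
      · exact h2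
  · rw [Finset.disjoint_left]
    intro i h1 h2
    simp only [Finset.mem_filter] at h1 h2
    omega

lemma token_balanced (h : tokensHyp KT KF L)
    (hsorted : (L.map Prod.fst).Pairwise (· < ·)) (hTltF : ∀ i, KT i < KF i) :
    BalancedBP (L.map Prod.snd) := by
  classical
  have hcnt : (L.map Prod.snd).count true = m ∧ (L.map Prod.snd).count false = m := by
    rw [count_map_snd_true, count_map_snd_false, countP_tokens h, countP_tokens h]
    constructor <;> simp
  refine ⟨by omega, ?_⟩
  intro k
  rcases Nat.eq_zero_or_pos k with rfl | hk
  · simp [excess]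
  rcases Nat.lt_or_ge (k - 1) L.length with hlt | hge
  · have hk1 : k = (k - 1) + 1 := by omega
    have he := excess_take_succ h hsorted hlt
    rw [← hk1] at he
    have hsub : (Finset.univ.filter (fun i => KF i ≤ L[k-1].1)).card ≤
        (Finset.univ.filter (fun i => KT i ≤ L[k-1].1)).card := by
      apply Finset.card_le_card
      intro i hi
      simp only [Finset.mem_filter, Finset.mem_univ, true_and] at hi ⊢
      have := hTltF i
      omega
    unfold excess at he
    omega
  · have hlen : (L.map Prod.snd).length ≤ k := by simpa using (by omega : L.length ≤ k)
    rw [List.take_of_length_le hlen]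
    omega

lemma keyIdx_succ_iff (hsorted : (L.map Prod.fst).Pairwise (· < ·))
    {x y : ℕ} (hx : x ∈ L.map Prod.fst) (hy : y ∈ L.map Prod.fst) :
    keyIdx L y = keyIdx L x + 1 ↔
      (x < y ∧ ∀ z ∈ L.map Prod.fst, z ≤ x ∨ y ≤ z) := by
  constructor
  · intro heq
    have hxy : x < y := by
      apply (keyIdx_lt_keyIdx hsorted hx hy).mp
      omega
    refine ⟨hxy, ?_⟩
    intro z hz
    rcases Nat.lt_or_ge (keyIdx L z) (keyIdx L y) with hc | hc
    · left
      have hc2 : keyIdx L z ≤ keyIdx L x := by omega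
      rcases Nat.eq_or_lt_of_le hc2 with he | hlt
      · have h1 := keyIdx_key hz
        have h2 := keyIdx_key hx
        simp only [he] at h1
        omega
      · have := (keyIdx_lt_keyIdx hsorted hz hx).mp hlt
        omega
    · right
      rcases Nat.eq_or_lt_of_le hc with he | hlt
      · have h1 := keyIdx_key hz
        have h2 := keyIdx_key hy
        simp only [← he] at h1
        omega
      · have := (keyIdx_lt_keyIdx hsorted hy hz).mp hlt
        omega
  · rintro ⟨hxy, hno⟩
    have h1 : keyIdx L x < keyIdx L y := (keyIdx_lt_keyIdx hsorted hx hy).mpr hxy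
    by_contra hne
    have h2 : keyIdx L x + 1 < keyIdx L y := by omega
    have hylt : keyIdx L y < L.length := keyIdx_lt hy
    have hnlt : keyIdx L x + 1 < L.length := by omega
    set z := L[keyIdx L x + 1].1 with hzdef
    have hzmem : z ∈ L.map Prod.fst := by
      rw [hzdef]
      exact List.mem_map_of_mem (List.getElem_mem _)
    have hxz : x < z := by
      have := (sorted_key_lt_iff hsorted (keyIdx_lt hx) hnlt).mpr (by omega)
      rw [keyIdx_key hx] at this
      exact this
    have hzy : z < y := by
      have := (sorted_key_lt_iff hsorted hnlt hylt).mpr h2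
      rw [keyIdx_key hy] at this
      exact this
    rcases hno z hzmem with hc | hc <;> omega

lemma token_match (h : tokensHyp KT KF L)
    (hsorted : (L.map Prod.fst).Pairwise (· < ·))
    (hTltF : ∀ i, KT i < KF i)
    (hlam1 : ∀ i j : Fin m, i ≠ j → KT j < KT i → KT i < KF j → KF i < KF j)
    (hlam2 : ∀ i j : Fin m, i ≠ j → KT j < KF i → KF i < KF j → KT j < KT i)
    (j : Fin m) :
    IsMatch (L.map Prod.snd) (keyIdx L (KT j)) (keyIdx L (KF j)) := by
  classical
  obtain ⟨hTinj, hFinj, hTF⟩ := key_injs h hsorted.nodup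
  have hmT : ∀ i : Fin m, KT i ∈ L.map Prod.fst :=
    fun i => List.mem_map_of_mem (tok_mem_T h i)
  have hmF : ∀ i : Fin m, KF i ∈ L.map Prod.fst :=
    fun i => List.mem_map_of_mem (tok_mem_F h i)
  have hTlt : keyIdx L (KT j) < L.length := keyIdx_lt (hmT j)
  have hFlt : keyIdx L (KF j) < L.length := keyIdx_lt (hmF j)
  have hkeyT : (L[keyIdx L (KT j)]'hTlt).1 = KT j := keyIdx_key (hmT j)
  have hkeyF : (L[keyIdx L (KF j)]'hFlt).1 = KF j := keyIdx_key (hmF j)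
  have hTFlt : keyIdx L (KT j) < keyIdx L (KF j) :=
    (keyIdx_lt_keyIdx hsorted (hmT j) (hmF j)).mpr (hTltF j)
  have hgetT : (L.map Prod.snd)[keyIdx L (KT j)]? = some true := by
    rw [List.getElem?_eq_getElem (by simpa using hTlt)]
    have := entry_T h hsorted.nodup j
    simp only [List.getElem_map]
    rw [this]
  have hgetF : (L.map Prod.snd)[keyIdx L (KF j)]? = some false := by
    rw [List.getElem?_eq_getElem (by simpa using hFlt)]
    have := entry_F h hsorted.nodup j
    simp only [List.getElem_map]
    rw [this]
  have hEidx : excess (L.map Prod.snd) (keyIdx L (KT j)) =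
      ((Finset.univ.filter (fun i => KT i < KT j)).card : ℤ) -
        ((Finset.univ.filter (fun i => KF i < KT j)).card : ℤ) := by
    rw [excess_take_idx h hsorted hTlt, hkeyT]
  have hsetEq : Finset.univ.filter (fun i => KT j ≤ KT i ∧ KT i ≤ KF j) =
      Finset.univ.filter (fun i => KT j ≤ KF i ∧ KF i ≤ KF j) := by
    ext i
    simp only [Finset.mem_filter, Finset.mem_univ, true_and]
    by_cases hij : i = j
    · subst hij
      constructor
      · intro _
        exact ⟨le_of_lt (hTltF i), le_refl _⟩
      · intro _
        exact ⟨le_refl _, le_of_lt (hTltF i)⟩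
    · constructor
      · rintro ⟨h1, h2⟩
        have h1' : KT j < KT i := lt_of_le_of_ne h1 (fun e => hij (hTinj e.symm))
        have h2' : KT i < KF j := lt_of_le_of_ne h2 (hTF i j)
        have h3 := hlam1 i j hij h1' h2'
        have h4 := hTltF i
        exact ⟨by omega, by omega⟩
      · rintro ⟨h1, h2⟩
        have h1' : KT j < KF i := lt_of_le_of_ne h1 (fun e => hTF j i e)
        have h2' : KF i < KF j := lt_of_le_of_ne h2 (fun e => hij (hFinj e))
        have h3 := hlam2 i j hij h1' h2'
        have h4 := hTltF i
        exact ⟨by omega, by omega⟩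
  refine ⟨hTFlt, by simpa using hFlt, hgetT, hgetF, ?_, ?_⟩
  · rw [excess_take_succ h hsorted hFlt, hkeyF, hEidx]
    rw [card_filter_le_split KT (KT j) (KF j) (le_of_lt (hTltF j)),
      card_filter_le_split KF (KT j) (KF j) (le_of_lt (hTltF j)), hsetEq]
    push_cast
    ring
  · intro k hk1 hk2
    obtain ⟨n, rfl⟩ : ∃ n, k = n + 1 := ⟨k - 1, by omega⟩
    have hnlt : n < L.length := by omega
    have hY1 : KT j ≤ L[n].1 := by
      rcases Nat.eq_or_lt_of_le (show keyIdx L (KT j) ≤ n by omega) with he | hlt2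
      · have hkeyT' := hkeyT
        simp only [he] at hkeyT'
        omega
      · have := (sorted_key_lt_iff hsorted hTlt hnlt).mpr hlt2
        rw [hkeyT] at this
        omega
    have hY2 : L[n].1 < KF j := by
      have := (sorted_key_lt_iff hsorted hnlt hFlt).mpr (by omega)
      rw [hkeyF] at this
      omega
    rw [excess_take_succ h hsorted hnlt, hEidx]
    rw [card_filter_le_split KT (KT j) (L[n].1) hY1,
      card_filter_le_split KF (KT j) (L[n].1) hY1]
    have hss : Finset.univ.filter (fun i => KT j ≤ KF i ∧ KF i ≤ L[n].1) ⊂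
        Finset.univ.filter (fun i => KT j ≤ KT i ∧ KT i ≤ L[n].1) := by
      rw [Finset.ssubset_def]
      constructor
      · intro i hi
        simp only [Finset.mem_filter, Finset.mem_univ, true_and] at hi ⊢
        obtain ⟨h1, h2⟩ := hi
        have hij : i ≠ j := by
          intro e
          subst e
          omega
        have h1' : KT j < KF i := lt_of_le_of_ne h1 (fun e => hTF j i e)
        have h2' : KF i < KF j := by omega
        have h3 := hlam2 i j hij h1' h2'
        have h4 := hTltF i
        exact ⟨by omega, by omega⟩
      · intro hsub
        have hjmem : j ∈ Finset.univ.filter (fun i => KT j ≤ KT i ∧ KT i ≤ L[n].1) := by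
          simp only [Finset.mem_filter, Finset.mem_univ, true_and]
          exact ⟨le_refl _, hY1⟩
        have := hsub hjmem
        simp only [Finset.mem_filter, Finset.mem_univ, true_and] at this
        omega
    have hcard := Finset.card_lt_card hss
    push_cast
    omega

end Tokens3

/-- replacing, for each micro tree of a Farzan--Munro
decomposition, its left chunk by `'('` and its right chunk by `')'` (a
zero-width right chunk sitting right after its left chunk) yields the BP
encoding of the top-tier tree: a binary tree whose nodes are in parent-
preserving bijection with the micro trees. -/
theorem contraction_is_topTier_bp (t : BinTree) (m : ℕ)
    (μ : Fin m → Set (List Bool)) (r : Fin m → List Bool)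
    (hmicro : ∀ i, IsMicroTree t (μ i))
    (hroot : ∀ i, r i ∈ μ i ∧ ∀ p ∈ μ i, r i <+: p)
    (hdisj : ∀ i j, i ≠ j → Disjoint (μ i) (μ j))
    (hcover : ∀ p, BinTree.ValidPath t p → ∃ i, p ∈ μ i)
    (hsingle : ∀ i, 2 ≤ (childEdges t (μ i)).ncard → ∃ p, μ i = {p})
    (a b c d : Fin m → ℕ)
    (hchunks : ∀ i, bpPositions t (μ i) = Set.Ico (a i) (b i) ∪ Set.Ico (c i) (d i))
    (hleft : ∀ i, a i < b i)
    (horder : ∀ i, b i ≤ c i ∧ c i ≤ d i)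
    (hzero : ∀ i, c i = d i → c i = b i)
    (L : List (ℕ × Bool))
    -- `L` lists all chunks sorted left to right; the key `2 * start + 1` is
    -- used for nonempty chunks and `2 * position` for zero-width right chunks
    -- so that a zero-width right chunk precedes any chunk starting at the same
    -- position.
    (hL : (L : Multiset (ℕ × Bool)) =
        Multiset.map (fun i => (2 * a i + 1, true)) Finset.univ.val +
        Multiset.map
          (fun i => (if c i = d i then 2 * c i else 2 * c i + 1, false))
          Finset.univ.val)
    (hsorted : (L.map Prod.fst).Pairwise (· < ·)) :
    ∃ T : BinTree, L.map Prod.snd = T.bp ∧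
      ∃ φ : Fin m → List Bool,
        Function.Injective φ ∧
        (∀ i, BinTree.ValidPath T (φ i)) ∧
        (∀ q, BinTree.ValidPath T q → ∃ i, φ i = q) ∧
        (∀ i j, (∃ p ∈ μ j, ∃ bb : Bool, r i = p ++ [bb]) ↔
          ∃ bb : Bool, φ i = φ j ++ [bb]) := by
  classical
  set KT : Fin m → ℕ := fun i => 2 * a i + 1 with hKTdef
  set KF : Fin m → ℕ := fun i => if c i = d i then 2 * c i else 2 * c i + 1 with hKFdef
  have htok : tokensHyp KT KF L := hL
  have hTltF : ∀ i, KT i < KF i := by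
    intro i
    have h1 := hleft i
    have h2 := (horder i).1
    have h3 := (horder i).2
    simp only [hKTdef, hKFdef]
    split <;> omega
  obtain ⟨hTinj, hFinj, hTF⟩ := key_injs htok hsorted.nodup
  -- basic micro-tree facts
  have hvalmem : ∀ i, ∀ p ∈ μ i, BinTree.ValidPath t p := fun i => (hmicro i).2.1
  have hrvalid : ∀ i, BinTree.ValidPath t (r i) := fun i => hvalmem i _ (hroot i).1
  have hclosure : ∀ i, ∀ p ∈ μ i, ∀ q, r i <+: q → q <+: p →
      BinTree.ValidPath t q → q ∈ μ i := by
    intro i p hp q h1 h2 h3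
    obtain ⟨-, -, r', hr', hr'all⟩ := hmicro i
    have hre : r' = r i := by
      have h4 : r' <+: r i := (hr'all (r i) (hroot i).1).1
      have h5 : r i <+: r' := (hroot i).2 r' hr'
      exact h4.eq_of_length_le h5.length_le
    rw [hre] at hr'all
    exact (hr'all p hp).2 q h1 h2 h3
  -- positions
  have hpos_intro : ∀ i x, x ∈ bpPositions t (μ i) →
      (a i ≤ x ∧ x < b i) ∨ (c i ≤ x ∧ x < d i) := by
    intro i x hx
    have := (Set.ext_iff.mp (hchunks i) x).mp hx
    simpa [Set.mem_Ico] using this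
  have hpos_elim : ∀ i x, (a i ≤ x ∧ x < b i) ∨ (c i ≤ x ∧ x < d i) →
      ∃ p ∈ μ i, BinTree.openIdx t p = some x ∨ BinTree.closeIdx t p = some x := by
    intro i x hx
    have := (Set.ext_iff.mp (hchunks i) x).mpr (by simpa [Set.mem_Ico] using hx)
    exact this
  have hpos_mk : ∀ i x p, p ∈ μ i →
      (BinTree.openIdx t p = some x ∨ BinTree.closeIdx t p = some x) →
      (a i ≤ x ∧ x < b i) ∨ (c i ≤ x ∧ x < d i) := by
    intro i x p hp hpx
    exact hpos_intro i x ⟨p, hp, hpx⟩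
  have hposdisj : ∀ i j : Fin m, i ≠ j → ∀ x,
      (∃ p ∈ μ i, BinTree.openIdx t p = some x ∨ BinTree.closeIdx t p = some x) →
      (∃ p ∈ μ j, BinTree.openIdx t p = some x ∨ BinTree.closeIdx t p = some x) →
      False := by
    intro i j hij x ⟨p, hp, hpx⟩ ⟨q, hq, hqx⟩
    have hpq : p = q := by
      rcases hpx with h1 | h1 <;> rcases hqx with h2 | h2
      · exact BinTree.openIdx_inj h1 h2
      · exact absurd (BinTree.closeIdx_get h2) (by rw [BinTree.openIdx_get h1]; simp)
      · exact absurd (BinTree.closeIdx_get h1) (by rw [BinTree.openIdx_get h2]; simp)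
      · exact BinTree.closeIdx_inj h1 h2
    subst hpq
    exact Set.disjoint_left.mp (hdisj i j hij) hp hq
  have hchunkdisj : ∀ i j : Fin m, i ≠ j → ∀ x,
      ((a i ≤ x ∧ x < b i) ∨ (c i ≤ x ∧ x < d i)) →
      ((a j ≤ x ∧ x < b j) ∨ (c j ≤ x ∧ x < d j)) → False := by
    intro i j hij x h1 h2
    exact hposdisj i j hij x (hpos_elim i x h1) (hpos_elim j x h2)
  have horoot : ∀ i, BinTree.openIdx t (r i) = some (a i) := by
    intro i
    obtain ⟨k, hk⟩ := BinTree.valid_openIdx (hrvalid i)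
    have h1 : (a i ≤ k ∧ k < b i) ∨ (c i ≤ k ∧ k < d i) :=
      hpos_mk i k (r i) (hroot i).1 (Or.inl hk)
    have h2 : k ≤ a i := by
      obtain ⟨p, hp, hpx⟩ := hpos_elim i (a i) (Or.inl ⟨le_refl _, hleft i⟩)
      exact BinTree.prefix_openIdx_le ((hroot i).2 p hp) hk hpx
    have h3 := (horder i).1
    have h4 := (horder i).2
    have h5 := hleft i
    have : k = a i := by omega
    rw [← this]
    exact hk
  have hposlt : ∀ (i : Fin m) x,
      ((a i ≤ x ∧ x < b i) ∨ (c i ≤ x ∧ x < d i)) → x < (BinTree.bp t).length := by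
    intro i x hx
    obtain ⟨p, -, hpx⟩ := hpos_elim i x hx
    rcases hpx with h | h
    · exact BinTree.openIdx_lt_length h
    · exact BinTree.closeIdx_lt_length h
  -- laminar core
  have poslam : ∀ j k : Fin m, j ≠ k → a j < a k → a k ≤ d j - 1 →
      ∀ x, ((a k ≤ x ∧ x < b k) ∨ (c k ≤ x ∧ x < d k)) → x < d j - 1 := by
    intro j k hjk hajk hakm
    obtain ⟨uj1, uj2, hsj⟩ := hrvalid j
    have hMpos : (a j ≤ d j - 1 ∧ d j - 1 < b j) ∨ (c j ≤ d j - 1 ∧ d j - 1 < d j) := by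
      by_cases hcd : c j = d j
      · have h1 := hzero j hcd
        have h2 := hleft j
        have h3 := (horder j).1
        left
        omega
      · have h1 := (horder j).1
        have h2 := (horder j).2
        have h3 := hleft j
        right
        omega
    have hMex := hpos_elim j (d j - 1) hMpos
    have hreg : ∀ x, ((a j ≤ x ∧ x < b j) ∨ (c j ≤ x ∧ x < d j)) →
        x < a j + (BinTree.bp (BinTree.node uj1 uj2)).length := by
      intro x hx
      obtain ⟨p, hp, hpx⟩ := hpos_elim j x hx
      exact ((BinTree.region_iff hsj (horoot j) hpx).mpr ((hroot j).2 p hp)).2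
    have hprefjk : r j <+: r k := by
      have h1 : a k < a j + (BinTree.bp (BinTree.node uj1 uj2)).length := by
        have hM := hreg (d j - 1) hMpos
        omega
      exact (BinTree.region_iff hsj (horoot j) (Or.inl (horoot k))).mp ⟨by omega, h1⟩
    have hrne : r j ≠ r k := by
      intro he
      have h1 := horoot j
      rw [he, horoot k] at h1
      simp at h1
      omega
    have claimC : ∀ w, w ∈ μ k → ∀ ow cw, BinTree.openIdx t w = some ow →
        BinTree.closeIdx t w = some cw → ow < d j - 1 → cw < d j - 1 := by
      intro w hw ow cw how hcw howM
      by_contra hge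
      push_neg at hge
      have hcwpos := hpos_mk k cw w hw (Or.inr hcw)
      have hMneq : cw ≠ d j - 1 := by
        intro he
        refine hposdisj k j hjk.symm cw ⟨w, hw, Or.inr hcw⟩ ?_
        rw [he]
        exact hMex
      obtain ⟨v, hv, hvx⟩ := hMex
      obtain ⟨hwpref, hwne⟩ := BinTree.strict_inside how hcw hvx howM (by omega)
      rcases List.prefix_or_prefix_of_prefix hwpref ((hroot j).2 v hv) with hc | hc
      · have h1 : r k <+: w := (hroot k).2 w hw
        have heq : r j = r k := hprefjk.eq_of_length_le (le_trans h1.length_le hc.length_le)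
        exact hrne heq
      · have hwval : BinTree.ValidPath t w := BinTree.openIdx_valid how
        have hwj : w ∈ μ j := hclosure j v hv w hc hwpref hwval
        exact Set.disjoint_left.mp (hdisj j k hjk) hwj hw
    have main : ∀ n, ∀ w, w ∈ μ k → w.length = n →
        ∀ x, (BinTree.openIdx t w = some x ∨ BinTree.closeIdx t w = some x) →
        x < d j - 1 := by
      intro n
      induction n using Nat.strong_induction_on with
      | _ n ih =>
        intro w hw hlen x hx
        have hwval := hvalmem k w hw
        obtain ⟨ow, how⟩ := BinTree.valid_openIdx hwval
        obtain ⟨cw, hcw⟩ := BinTree.valid_closeIdx hwval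
        have hodisj : ow ≠ d j - 1 := by
          intro he
          refine hposdisj k j hjk.symm ow ⟨w, hw, Or.inl how⟩ ?_
          rw [he]
          exact hMex
        have howM : ow < d j - 1 := by
          by_cases hwr : w = r k
          · have h1 : ow = a k := by
              have h2 := horoot k
              rw [← hwr, how] at h2
              simp at h2
              omega
            omega
          · have hrkw : r k <+: w := (hroot k).2 w hw
            have hwnil : w ≠ [] := by
              intro he
              apply hwr
              subst he
              have h1 : r k = [] := List.prefix_nil.mp hrkw
              rw [h1]
            have hwu : w = w.dropLast ++ [w.getLast hwnil] := (List.dropLast_append_getLast hwnil).symm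
            have hupre : w.dropLast <+: w := List.dropLast_prefix w
            have hrku : r k <+: w.dropLast := by
              apply List.prefix_of_prefix_length_le hrkw hupre
              have h1 : (r k).length ≤ w.length := hrkw.length_le
              have h3 : (r k).length ≠ w.length := by
                intro he
                exact hwr (hrkw.eq_of_length_le (le_of_eq he.symm)).symm
              have h4 : w.dropLast.length = w.length - 1 := by
                rw [List.length_dropLast]
              have h5 : 0 < w.length := List.length_pos_iff.mpr hwnil
              omega
            have huval : BinTree.ValidPath t w.dropLast := by
              apply BinTree.valid_parent (bb := w.getLast hwnil)
              rw [← hwu]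
              exact hwval
            have huk : w.dropLast ∈ μ k := hclosure k w hw w.dropLast hrku hupre huval
            have hwlenpos : 0 < w.length := List.length_pos_iff.mpr hwnil
            have ihu : ∀ y, (BinTree.openIdx t w.dropLast = some y ∨
                BinTree.closeIdx t w.dropLast = some y) → y < d j - 1 := by
              intro y hy
              apply ih w.dropLast.length (by rw [List.length_dropLast]; omega) w.dropLast huk rfl y hy
            rcases Bool.eq_false_or_eq_true (w.getLast hwnil) with hbb | hbb
            · rw [hbb] at hwu
              have hwval2 : BinTree.ValidPath t (w.dropLast ++ [true]) := by
                rw [← hwu]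
                exact hwval
              obtain ⟨kk, hk1, hk2⟩ := BinTree.openIdx_append_true hwval2
              have h6 : ow = kk + 1 := by
                have h7 := how
                rw [hwu, hk2] at h7
                simp at h7
                omega
              have h8 : kk < d j - 1 := ihu kk (Or.inr hk1)
              omega
            · rw [hbb] at hwu
              have hwval2 : BinTree.ValidPath t (w.dropLast ++ [false]) := by
                rw [← hwu]
                exact hwval
              obtain ⟨kk, hk1, hk2⟩ := BinTree.openIdx_append_false hwval2
              have h6 : ow = kk + 1 := by
                have h7 := how
                rw [hwu, hk2] at h7
                simp at h7
                omega
              have h8 : kk < d j - 1 := ihu kk (Or.inl hk1)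
              omega
        have hcwM : cw < d j - 1 := claimC w hw ow cw how hcw howM
        rcases hx with h | h
        · rw [how] at h
          simp at h
          omega
        · rw [hcw] at h
          simp at h
          omega
    intro x hxk
    obtain ⟨w, hw, hwx⟩ := hpos_elim k x hxk
    exact main w.length w hw rfl x hwx
  -- key laminarity
  have hlam1 : ∀ i j : Fin m, i ≠ j → KT j < KT i → KT i < KF j → KF i < KF j := by
    intro i j hij h1 h2
    have haij : a j < a i := by
      simp only [hKTdef] at h1
      omega
    by_cases hcdj : c j = d j
    · exfalso
      have hbj := hzero j hcdj
      have h2' : a i < b j := by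
        simp only [hKTdef, hKFdef, if_pos hcdj] at h2
        omega
      exact hchunkdisj i j hij (a i) (Or.inl ⟨le_refl _, hleft i⟩) (Or.inl ⟨by omega, h2'⟩)
    · have h2' : a i < c j := by
        simp only [hKTdef, hKFdef, if_neg hcdj] at h2
        omega
      have hcdj' : c j < d j := by
        have := (horder j).2
        omega
      have hplam := poslam j i hij.symm haij (by omega)
      by_cases hcdi : c i = d i
      · have hbi := hzero i hcdi
        have hli := hleft i
        have hb1 : b i - 1 < d j - 1 :=
          hplam (b i - 1) (Or.inl ⟨by omega, by omega⟩)
        have hnot : ¬ (c j ≤ b i - 1 ∧ b i - 1 < d j) := by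
          intro hcc
          exact hchunkdisj i j hij (b i - 1) (Or.inl ⟨by omega, by omega⟩) (Or.inr hcc)
        simp only [hKFdef, if_pos hcdi, if_neg hcdj]
        omega
      · have hcdi' : c i < d i := by
          have := (horder i).2
          omega
        have hc1 : c i < d j - 1 := hplam (c i) (Or.inr ⟨le_refl _, hcdi'⟩)
        have hnot : ¬ (c j ≤ c i ∧ c i < d j) := fun hcc =>
          hchunkdisj i j hij (c i) (Or.inr ⟨le_refl _, hcdi'⟩) (Or.inr hcc)
        simp only [hKFdef, if_neg hcdi, if_neg hcdj]
        omega
  have hlam2 : ∀ i j : Fin m, i ≠ j → KT j < KF i → KF i < KF j → KT j < KT i := by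
    intro i j hij h1 h2
    by_contra hno
    push_neg at hno
    have haij : a i < a j := by
      have hne : KT i ≠ KT j := fun e => hij (hTinj e)
      simp only [hKTdef] at hno hne
      omega
    by_cases hcdi : c i = d i
    · have hbi := hzero i hcdi
      have h1' : a j < b i := by
        simp only [hKTdef, hKFdef, if_pos hcdi] at h1
        omega
      exact hchunkdisj j i hij.symm (a j) (Or.inl ⟨le_refl _, hleft j⟩)
        (Or.inl ⟨by omega, h1'⟩)
    · have hcdi' : c i < d i := by
        have := (horder i).2
        omega
      have h1' : a j < c i := by
        simp only [hKTdef, hKFdef, if_neg hcdi] at h1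
        omega
      have hplam := poslam i j hij haij (by omega)
      by_cases hcdj : c j = d j
      · have hbj := hzero j hcdj
        have hlj := hleft j
        have h2' : c i < b j := by
          simp only [hKFdef, if_neg hcdi, if_pos hcdj] at h2
          omega
        have hx : b j - 1 < d i - 1 :=
          hplam (b j - 1) (Or.inl ⟨by omega, by omega⟩)
        exact hchunkdisj j i hij.symm (b j - 1) (Or.inl ⟨by omega, by omega⟩)
          (Or.inr ⟨by omega, by omega⟩)
      · have hcdj' : c j < d j := by
          have := (horder j).2
          omega
        have h2' : c i < c j := by
          simp only [hKFdef, if_neg hcdi, if_neg hcdj] at h2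
          omega
        have hx : c j < d i - 1 := hplam (c j) (Or.inr ⟨le_refl _, hcdj'⟩)
        exact hchunkdisj j i hij.symm (c j) (Or.inr ⟨le_refl _, hcdj'⟩)
          (Or.inr ⟨by omega, by omega⟩)
  -- build T
  have hbal : BalancedBP (L.map Prod.snd) := token_balanced htok hsorted hTltF
  obtain ⟨T, hbpT⟩ := exists_tree_of_balanced (L.map Prod.snd).length (L.map Prod.snd)
    (le_refl _) hbal
  have hmatch : ∀ j, IsMatch (L.map Prod.snd) (keyIdx L (KT j)) (keyIdx L (KF j)) :=
    token_match htok hsorted hTltF hlam1 hlam2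
  have hmT : ∀ i : Fin m, KT i ∈ L.map Prod.fst :=
    fun i => List.mem_map_of_mem (tok_mem_T htok i)
  have hmF : ∀ i : Fin m, KF i ∈ L.map Prod.fst :=
    fun i => List.mem_map_of_mem (tok_mem_F htok i)
  -- define φ
  have hφex : ∀ i : Fin m, ∃ p, BinTree.openIdx T p = some (keyIdx L (KT i)) := by
    intro i
    have hlt : keyIdx L (KT i) < (BinTree.bp T).length := by
      rw [hbpT]
      simpa using keyIdx_lt (hmT i)
    obtain ⟨p, hp⟩ := BinTree.paren_surj hlt
    rcases hp with hp | hp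
    · exact ⟨p, hp⟩
    · exfalso
      have h1 := BinTree.closeIdx_get hp
      rw [hbpT] at h1
      have h2 : (L.map Prod.snd)[keyIdx L (KT i)]? = some true := by
        rw [List.getElem?_eq_getElem (by simpa using keyIdx_lt (hmT i))]
        have := entry_T htok hsorted.nodup i
        simp only [List.getElem_map]
        rw [this]
      rw [h2] at h1
      simp at h1
  set φ : Fin m → List Bool := fun i => Classical.choose (hφex i) with hφdef
  have hφ : ∀ i, BinTree.openIdx T (φ i) = some (keyIdx L (KT i)) :=
    fun i => Classical.choose_spec (hφex i)
  have hφvalid : ∀ i, BinTree.ValidPath T (φ i) := fun i => BinTree.openIdx_valid (hφ i)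
  have hφclose : ∀ j, BinTree.closeIdx T (φ j) = some (keyIdx L (KF j)) := by
    intro j
    obtain ⟨cc, hcc⟩ := BinTree.valid_closeIdx (hφvalid j)
    have h1 : IsMatch (L.map Prod.snd) (keyIdx L (KT j)) cc := by
      have := BinTree.isMatch_open_close (hφ j) hcc
      rwa [hbpT] at this
    rw [hcc, isMatch_unique h1 (hmatch j)]
  have hφinj : Function.Injective φ := by
    intro i i' he
    have h1 := hφ i
    rw [he, hφ i'] at h1
    simp only [Option.some_inj] at h1
    have h2 := keyIdx_key (hmT i)
    have h3 := keyIdx_key (hmT i')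
    simp only [h1] at h3
    exact hTinj (h2.symm.trans h3)
  refine ⟨T, hbpT.symm, φ, hφinj, hφvalid, ?_, ?_⟩
  · -- surjectivity
    intro q hq
    obtain ⟨x, hx⟩ := BinTree.valid_openIdx hq
    have hxlt : x < L.length := by
      have := BinTree.openIdx_lt_length hx
      rw [hbpT] at this
      simpa using this
    have hxtrue : L[x].2 = true := by
      have h1 := BinTree.openIdx_get hx
      rw [hbpT, List.getElem?_eq_getElem (by simpa using hxlt), List.getElem_map] at h1
      simpa using h1
    rcases tok_cases htok (List.getElem_mem hxlt) with ⟨i, hi⟩ | ⟨i, hi⟩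
    · refine ⟨i, ?_⟩
      have hxi : keyIdx L (KT i) = x := by
        have h2 : L[x].1 = KT i := by rw [hi]
        rw [← h2]
        exact keyIdx_of_idx hsorted hxlt
      apply BinTree.openIdx_inj (t := T) (hφ i)
      rw [hxi]
      exact hx
    · exfalso
      rw [hi] at hxtrue
      simp at hxtrue
  · -- the parent correspondence
    have hgetTT : ∀ i : Fin m, (L.map Prod.snd)[keyIdx L (KT i)]? = some true := by
      intro i
      rw [List.getElem?_eq_getElem (by simpa using keyIdx_lt (hmT i))]
      have := entry_T htok hsorted.nodup i
      simp only [List.getElem_map]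
      rw [this]
    intro i j
    constructor
    · rintro ⟨p, hp, bb, hrieq⟩
      have hij : i ≠ j := by
        rintro rfl
        have h1 : r i <+: p := (hroot i).2 p hp
        have h2 := h1.length_le
        rw [hrieq, List.length_append] at h2
        simp at h2
      have hrieqv : BinTree.ValidPath t (p ++ [bb]) := by
        rw [← hrieq]
        exact hrvalid i
      have hx : ∃ x, (BinTree.openIdx t p = some x ∨ BinTree.closeIdx t p = some x) ∧
          a i = x + 1 := by
        cases bb
        · obtain ⟨kk, hk1, hk2⟩ := BinTree.openIdx_append_false hrieqv
          refine ⟨kk, Or.inl hk1, ?_⟩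
          have h3 := horoot i
          rw [hrieq, hk2] at h3
          simp at h3
          omega
        · obtain ⟨kk, hk1, hk2⟩ := BinTree.openIdx_append_true hrieqv
          refine ⟨kk, Or.inr hk1, ?_⟩
          have h3 := horoot i
          rw [hrieq, hk2] at h3
          simp at h3
          omega
      obtain ⟨x, hxp, hxa⟩ := hx
      have hxj : (a j ≤ x ∧ x < b j) ∨ (c j ≤ x ∧ x < d j) := hpos_mk j x p hp hxp
      have hanext : keyIdx L (KT i) = keyIdx L (KT j) + 1 ∨
          keyIdx L (KT i) = keyIdx L (KF j) + 1 := by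
        rcases hxj with ⟨h1, h2⟩ | ⟨h1, h2⟩
        · have hbj_ai : b j = a i := by
            rcases Nat.lt_or_ge (a i) (b j) with hlt | hge
            · exfalso
              exact hchunkdisj i j hij (a i) (Or.inl ⟨le_refl _, hleft i⟩)
                (Or.inl ⟨by omega, hlt⟩)
            · omega
          by_cases hcdj : c j = d j
          · right
            apply (keyIdx_succ_iff hsorted (hmF j) (hmT i)).mpr
            have hbj := hzero j hcdj
            constructor
            · simp only [hKTdef, hKFdef, if_pos hcdj]
              omega
            · intro z hz
              simp only [hKTdef, hKFdef, if_pos hcdj]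
              omega
          · left
            apply (keyIdx_succ_iff hsorted (hmT j) (hmT i)).mpr
            refine ⟨by simp only [hKTdef]; omega, ?_⟩
            intro z hz
            obtain ⟨e, he, hez⟩ := List.mem_map.mp hz
            rcases tok_cases htok he with ⟨k, hk⟩ | ⟨k, hk⟩
            · have hzk : z = KT k := by rw [← hez, hk]
              subst hzk
              by_contra hcon
              push_neg at hcon
              obtain ⟨hc1, hc2⟩ := hcon
              have hkj : k ≠ j := by
                rintro rfl
                simp only [hKTdef] at hc1
                omega
              have hak1 : a j < a k := by simp only [hKTdef] at hc1; omega
              have hak2 : a k < b j := by simp only [hKTdef] at hc2; omega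
              exact hchunkdisj k j hkj (a k) (Or.inl ⟨le_refl _, hleft k⟩)
                (Or.inl ⟨by omega, hak2⟩)
            · have hzk : z = KF k := by rw [← hez, hk]
              subst hzk
              by_contra hcon
              push_neg at hcon
              obtain ⟨hc1, hc2⟩ := hcon
              by_cases hcdk : c k = d k
              · have hbk := hzero k hcdk
                have hlk := hleft k
                have hd1 : a j < b k := by
                  simp only [hKTdef, hKFdef, if_pos hcdk] at hc1
                  omega
                have hd2 : b k ≤ b j := by
                  simp only [hKTdef, hKFdef, if_pos hcdk] at hc2
                  omega
                have hkj : k ≠ j := by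
                  rintro rfl
                  omega
                exact hchunkdisj k j hkj (b k - 1) (Or.inl ⟨by omega, by omega⟩)
                  (Or.inl ⟨by omega, by omega⟩)
              · have hcdk' : c k < d k := by
                  have := (horder k).2
                  omega
                have hd1 : a j < c k := by
                  simp only [hKTdef, hKFdef, if_neg hcdk] at hc1
                  omega
                have hd2 : c k < b j := by
                  simp only [hKTdef, hKFdef, if_neg hcdk] at hc2
                  omega
                have hkj : k ≠ j := by
                  rintro rfl
                  have := (horder k).1
                  omega
                exact hchunkdisj k j hkj (c k) (Or.inr ⟨le_refl _, hcdk'⟩)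
                  (Or.inl ⟨by omega, hd2⟩)
        · have hcdj : ¬ (c j = d j) := by omega
          have hdj_ai : d j = a i := by
            rcases Nat.lt_or_ge (a i) (d j) with hlt | hge
            · exfalso
              exact hchunkdisj i j hij (a i) (Or.inl ⟨le_refl _, hleft i⟩)
                (Or.inr ⟨by omega, hlt⟩)
            · omega
          right
          apply (keyIdx_succ_iff hsorted (hmF j) (hmT i)).mpr
          refine ⟨by simp only [hKTdef, hKFdef, if_neg hcdj]; omega, ?_⟩
          intro z hz
          obtain ⟨e, he, hez⟩ := List.mem_map.mp hz
          rcases tok_cases htok he with ⟨k, hk⟩ | ⟨k, hk⟩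
          · have hzk : z = KT k := by rw [← hez, hk]
            subst hzk
            by_contra hcon
            push_neg at hcon
            obtain ⟨hc1, hc2⟩ := hcon
            have hd1 : c j < a k := by
              simp only [hKTdef, hKFdef, if_neg hcdj] at hc1
              omega
            have hd2 : a k < d j := by
              simp only [hKTdef] at hc2
              omega
            have hkj : k ≠ j := by
              rintro rfl
              have := (horder k).1
              have := hleft k
              omega
            exact hchunkdisj k j hkj (a k) (Or.inl ⟨le_refl _, hleft k⟩)
              (Or.inr ⟨by omega, hd2⟩)
          · have hzk : z = KF k := by rw [← hez, hk]
            subst hzk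
            by_contra hcon
            push_neg at hcon
            obtain ⟨hc1, hc2⟩ := hcon
            by_cases hcdk : c k = d k
            · have hbk := hzero k hcdk
              have hlk := hleft k
              have hd1 : c j < b k := by
                simp only [hKFdef, if_pos hcdk, if_neg hcdj] at hc1
                omega
              have hd2 : b k ≤ d j := by
                simp only [hKTdef, hKFdef, if_pos hcdk] at hc2
                omega
              have hkj : k ≠ j := by
                rintro rfl
                omega
              exact hchunkdisj k j hkj (b k - 1) (Or.inl ⟨by omega, by omega⟩)
                (Or.inr ⟨by omega, by omega⟩)
            · have hcdk' : c k < d k := by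
                have := (horder k).2
                omega
              have hd1 : c j < c k := by
                simp only [hKFdef, if_neg hcdk, if_neg hcdj] at hc1
                omega
              have hd2 : c k < d j := by
                simp only [hKTdef, hKFdef, if_neg hcdk] at hc2
                omega
              have hkj : k ≠ j := by
                rintro rfl
                omega
              exact hchunkdisj k j hkj (c k) (Or.inr ⟨le_refl _, hcdk'⟩)
                (Or.inr ⟨by omega, hd2⟩)
      rcases hanext with hadj | hadj
      · refine ⟨false, ?_⟩
        have hval2 : BinTree.ValidPath T (φ j ++ [false]) := by
          apply BinTree.valid_append_false_of_get (hφ j)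
          rw [← hadj, hbpT]
          exact hgetTT i
        obtain ⟨kk, hk1, hk2⟩ := BinTree.openIdx_append_false hval2
        have hkk : kk = keyIdx L (KT j) := by
          have h5 := hφ j
          rw [hk1] at h5
          simpa using h5
        apply BinTree.openIdx_inj (hφ i)
        rw [hk2, hkk, ← hadj]
      · refine ⟨true, ?_⟩
        have hval2 : BinTree.ValidPath T (φ j ++ [true]) := by
          apply BinTree.valid_append_true_of_get (hφclose j)
          rw [← hadj, hbpT]
          exact hgetTT i
        obtain ⟨kk, hk1, hk2⟩ := BinTree.openIdx_append_true hval2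
        have hkk : kk = keyIdx L (KF j) := by
          have h5 := hφclose j
          rw [hk1] at h5
          simpa using h5
        apply BinTree.openIdx_inj (hφ i)
        rw [hk2, hkk, ← hadj]
    · rintro ⟨bb, hφeq⟩
      have hij : i ≠ j := by
        rintro rfl
        apply_fun List.length at hφeq
        rw [List.length_append] at hφeq
        simp at hφeq
      have hadj : keyIdx L (KT i) = keyIdx L (KT j) + 1 ∨
          keyIdx L (KT i) = keyIdx L (KF j) + 1 := by
        cases bb
        · left
          have hval2 : BinTree.ValidPath T (φ j ++ [false]) := by
            rw [← hφeq]
            exact hφvalid i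
          obtain ⟨kk, hk1, hk2⟩ := BinTree.openIdx_append_false hval2
          have hkk : kk = keyIdx L (KT j) := by
            have h5 := hφ j
            rw [hk1] at h5
            simpa using h5
          have h6 := hφ i
          rw [hφeq, hk2] at h6
          simp only [Option.some_inj] at h6
          omega
        · right
          have hval2 : BinTree.ValidPath T (φ j ++ [true]) := by
            rw [← hφeq]
            exact hφvalid i
          obtain ⟨kk, hk1, hk2⟩ := BinTree.openIdx_append_true hval2
          have hkk : kk = keyIdx L (KF j) := by
            have h5 := hφclose j
            rw [hk1] at h5
            simpa using h5
          have h6 := hφ i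
          rw [hφeq, hk2] at h6
          simp only [Option.some_inj] at h6
          omega
      have hkey : ∃ y, y ∈ L.map Prod.fst ∧ (y = KT j ∨ y = KF j) ∧
          keyIdx L (KT i) = keyIdx L y + 1 := by
        rcases hadj with h | h
        · exact ⟨KT j, hmT j, Or.inl rfl, h⟩
        · exact ⟨KF j, hmF j, Or.inr rfl, h⟩
      obtain ⟨y, hymem, hyj, hyadj⟩ := hkey
      obtain ⟨hylt, hnoz⟩ := (keyIdx_succ_iff hsorted hymem (hmT i)).mp hyadj
      have hai1 : 1 ≤ a i := by
        rcases hyj with rfl | rfl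
        · simp only [hKTdef] at hylt
          omega
        · by_cases hcdj : c j = d j
          · have hbj := hzero j hcdj
            have := hleft j
            simp only [hKTdef, hKFdef, if_pos hcdj] at hylt
            omega
          · have := hleft j
            have := (horder j).1
            simp only [hKTdef, hKFdef, if_neg hcdj] at hylt
            omega
      have hxlt : a i - 1 < (BinTree.bp t).length := by
        have := hposlt i (a i) (Or.inl ⟨le_refl _, hleft i⟩)
        omega
      obtain ⟨w, hwx⟩ := BinTree.paren_surj hxlt
      have hwval : BinTree.ValidPath t w := by
        rcases hwx with h | h
        · exact BinTree.openIdx_valid h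
        · exact BinTree.closeIdx_valid h
      obtain ⟨k, hwk⟩ := hcover w hwval
      have hxk : (a k ≤ a i - 1 ∧ a i - 1 < b k) ∨ (c k ≤ a i - 1 ∧ a i - 1 < d k) :=
        hpos_mk k (a i - 1) w hwk hwx
      have hki : k ≠ i := by
        rintro rfl
        rcases hxk with ⟨h1, h2⟩ | ⟨h1, h2⟩
        · omega
        · have := (horder k).1
          have := hleft k
          omega
      have hkj : k = j := by
        by_contra hkj
        rcases hxk with ⟨h1, h2⟩ | ⟨h1, h2⟩
        · have hbk_ai : b k = a i := by
            rcases Nat.lt_or_ge (a i) (b k) with hlt | hge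
            · exfalso
              exact hchunkdisj i k hki.symm (a i) (Or.inl ⟨le_refl _, hleft i⟩)
                (Or.inl ⟨by omega, hlt⟩)
            · omega
          have hZlt : KT k < KT i := by
            simp only [hKTdef]
            omega
          have hZy : KT k ≤ y := by
            rcases hnoz (KT k) (hmT k) with hc | hc
            · exact hc
            · omega
          have hZney : KT k ≠ y := by
            rcases hyj with rfl | rfl
            · exact fun e => hkj (hTinj e)
            · exact hTF k j
          have hZy' : KT k < y := by omega
          rcases hyj with rfl | rfl
          · have hd1 : a k < a j := by
              simp only [hKTdef] at hZy'
              omega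
            have hd2 : a j < a i := by
              simp only [hKTdef] at hylt
              omega
            exact hchunkdisj j k (fun e => hkj e.symm) (a j)
              (Or.inl ⟨le_refl _, hleft j⟩) (Or.inl ⟨by omega, by omega⟩)
          · by_cases hcdj : c j = d j
            · have hbj := hzero j hcdj
              have hd1 : a k < b j := by
                simp only [hKTdef, hKFdef, if_pos hcdj] at hZy'
                omega
              have hd2 : b j ≤ a i := by
                simp only [hKTdef, hKFdef, if_pos hcdj] at hylt
                omega
              have hlj := hleft j
              exact hchunkdisj j k (fun e => hkj e.symm) (b j - 1)
                (Or.inl ⟨by omega, by omega⟩) (Or.inl ⟨by omega, by omega⟩)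
            · have hcdj' : c j < d j := by
                have := (horder j).2
                omega
              have hd1 : a k < c j := by
                simp only [hKTdef, hKFdef, if_neg hcdj] at hZy'
                omega
              have hd2 : c j < a i := by
                simp only [hKTdef, hKFdef, if_neg hcdj] at hylt
                omega
              exact hchunkdisj j k (fun e => hkj e.symm) (c j)
                (Or.inr ⟨le_refl _, hcdj'⟩) (Or.inl ⟨by omega, by omega⟩)
        · have hcdk' : c k < d k := by omega
          have hcdk : ¬ (c k = d k) := by omega
          have hdk_ai : d k = a i := by
            rcases Nat.lt_or_ge (a i) (d k) with hlt | hge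
            · exfalso
              exact hchunkdisj i k hki.symm (a i) (Or.inl ⟨le_refl _, hleft i⟩)
                (Or.inr ⟨by omega, hlt⟩)
            · omega
          have hZlt : KF k < KT i := by
            simp only [hKTdef, hKFdef, if_neg hcdk]
            omega
          have hZy : KF k ≤ y := by
            rcases hnoz (KF k) (hmF k) with hc | hc
            · exact hc
            · omega
          have hZney : KF k ≠ y := by
            rcases hyj with rfl | rfl
            · exact fun e => hTF j k e.symm
            · exact fun e => hkj (hFinj e)
          have hZy' : KF k < y := by omega
          rcases hyj with rfl | rfl
          · have hd1 : c k < a j := by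
              simp only [hKTdef, hKFdef, if_neg hcdk] at hZy'
              omega
            have hd2 : a j < a i := by
              simp only [hKTdef] at hylt
              omega
            exact hchunkdisj j k (fun e => hkj e.symm) (a j)
              (Or.inl ⟨le_refl _, hleft j⟩) (Or.inr ⟨by omega, by omega⟩)
          · by_cases hcdj : c j = d j
            · have hbj := hzero j hcdj
              have hd1 : c k < b j := by
                simp only [hKFdef, if_neg hcdk, if_pos hcdj] at hZy'
                omega
              have hd2 : b j ≤ a i := by
                simp only [hKTdef, hKFdef, if_pos hcdj] at hylt
                omega
              have hlj := hleft j
              exact hchunkdisj j k (fun e => hkj e.symm) (b j - 1)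
                (Or.inl ⟨by omega, by omega⟩) (Or.inr ⟨by omega, by omega⟩)
            · have hcdj' : c j < d j := by
                have := (horder j).2
                omega
              have hd1 : c k < c j := by
                simp only [hKFdef, if_neg hcdk, if_neg hcdj] at hZy'
                omega
              have hd2 : c j < a i := by
                simp only [hKTdef, hKFdef, if_neg hcdj] at hylt
                omega
              exact hchunkdisj j k (fun e => hkj e.symm) (c j)
                (Or.inr ⟨le_refl _, hcdj'⟩) (Or.inr ⟨by omega, by omega⟩)
      subst hkj
      have hopenri : BinTree.openIdx t (r i) = some ((a i - 1) + 1) := by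
        rw [horoot i]
        congr 1
        omega
      have hsx : (BinTree.bp t)[(a i - 1) + 1]? = some true := BinTree.openIdx_get hopenri
      rcases hwx with h | h
      · refine ⟨w, hwk, false, ?_⟩
        have hv2 := BinTree.valid_append_false_of_get h hsx
        obtain ⟨kk, hk1, hk2⟩ := BinTree.openIdx_append_false hv2
        have hkkx : kk = a i - 1 := by
          rw [h] at hk1
          simpa using hk1.symm
        apply BinTree.openIdx_inj hopenri
        rw [hk2, hkkx]
      · refine ⟨w, hwk, true, ?_⟩
        have hv2 := BinTree.valid_append_true_of_get h hsx
        obtain ⟨kk, hk1, hk2⟩ := BinTree.openIdx_append_true hv2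
        have hkkx : kk = a i - 1 := by
          rw [h] at hk1
          simpa using hk1.symm
        apply BinTree.openIdx_inj hopenri
        rw [hk2, hkkx]
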